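/- arXiv:math/0010075 — 4 statements merged into one kernel-verified Lean document; each statement's English description precedes it below -/
import Mathlib

section
/- Let $0 < p \le 1$ and $n \ge 1$. There exists a constant $C(p)$, depending only on $p$, such that for every finite collection $\mathcal{J}$ of dyadic cubes in $\mathbf{R}^n$ and every collection $\{f_Q : Q \in \mathcal{J}\}$ of nonnegative integrable functions on $\mathbf{R}^n$ with $\operatorname{supp} f_Q \subseteq Q$, one has $\big\| \sum_{Q \in \mathcal{J}} f_Q \big\|_{L^p(\mathbf{R}^n)} \le C(p) \, \big\| \sum_{Q \in \mathcal{J}} a_Q \chi_Q \big\|_{L^p(\mathbf{R}^n)}$, where $a_Q = |Q|^{-1} \int_Q f_Q(x)\,dx$. -/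
open MeasureTheory Set
open scoped ENNReal

attribute [local instance] Classical.propDecidable

noncomputable section

/-- A dyadic cube in `ℝⁿ`: a set of the form `∏ i, [2⁻ʲ kᵢ, 2⁻ʲ (kᵢ + 1))`. -/
def IsDyadicCube {n : ℕ} (Q : Set (EuclideanSpace ℝ (Fin n))) : Prop :=
  ∃ (j : ℤ) (k : Fin n → ℤ),
    Q = {x | ∀ i, x i ∈ Set.Ico ((2:ℝ) ^ (-j) * k i) ((2:ℝ) ^ (-j) * (k i + 1))}

lemma dyadic_aux {j j' : ℤ} (h : j ≤ j') {k k' : ℤ} {t : ℝ}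
    (h1 : (2:ℝ)^(-j) * k ≤ t) (h2 : t < (2:ℝ)^(-j)*(k+1))
    (h3 : (2:ℝ)^(-j') * k' ≤ t) (h4 : t < (2:ℝ)^(-j')*(k'+1)) :
    (2:ℝ)^(-j) * k ≤ (2:ℝ)^(-j') * k' ∧ (2:ℝ)^(-j')*(k'+1) ≤ (2:ℝ)^(-j)*(k+1) := by
  set c : ℤ := 2 ^ (j' - j).toNat with hc
  have hcr : ((c:ℝ)) = (2:ℝ) ^ (j' - j) := by
    rw [hc]; push_cast
    rw [← zpow_natCast (2:ℝ), Int.toNat_of_nonneg (sub_nonneg.2 h)]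
  have he : (0:ℝ) < (2:ℝ)^(-j') := zpow_pos (by norm_num) _
  have hE : (2:ℝ)^(-j) = (2:ℝ)^(-j') * c := by
    rw [hcr, ← zpow_add₀ (two_ne_zero)]; ring_nf
  rw [hE] at h1 h2
  -- integer inequalities
  have i1 : (c*k : ℝ) < k' + 1 := by
    have := lt_of_le_of_lt h1 h4
    have := (mul_lt_mul_iff_right₀ he).mp (by linarith [this] : (2:ℝ)^(-j') * (c*k) < (2:ℝ)^(-j') * (k'+1))
    exact_mod_cast this
  have i2 : (k' : ℝ) < c*(k+1) := by
    have := lt_of_le_of_lt h3 h2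
    have := (mul_lt_mul_iff_right₀ he).mp (by linarith [this] : (2:ℝ)^(-j') * (k':ℝ) < (2:ℝ)^(-j') * (c*(k+1)))
    exact this
  have j1 : c*k ≤ k' := by
    have : (c*k : ℤ) < k' + 1 := by exact_mod_cast i1
    omega
  have j2 : k' + 1 ≤ c*(k+1) := by
    have : (k' : ℤ) < c*(k+1) := by exact_mod_cast i2
    omega
  constructor
  · rw [hE, mul_assoc]
    have : ((c:ℝ) * k) ≤ (k' : ℝ) := by exact_mod_cast j1
    nlinarith
  · rw [hE, mul_assoc]
    have : ((k':ℝ) + 1) ≤ (c:ℝ)*(k+1) := by exact_mod_cast j2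
    nlinarith

/-- two dyadic cubes sharing a point are nested -/
lemma IsDyadicCube.nested {n : ℕ} {Q Q' : Set (EuclideanSpace ℝ (Fin n))}
    (hQ : IsDyadicCube Q) (hQ' : IsDyadicCube Q') {x : EuclideanSpace ℝ (Fin n)}
    (hx : x ∈ Q) (hx' : x ∈ Q') : Q ⊆ Q' ∨ Q' ⊆ Q := by
  obtain ⟨j, k, rfl⟩ := hQ
  obtain ⟨j', k', rfl⟩ := hQ'
  rcases le_total j j' with h | h
  · right
    intro y hy i
    have h1 := (hx i).1; have h2 := (hx i).2
    have h3 := (hx' i).1; have h4 := (hx' i).2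
    obtain ⟨a, b⟩ := dyadic_aux h h1 h2 h3 h4
    exact ⟨le_trans a (hy i).1, lt_of_lt_of_le (hy i).2 b⟩
  · left
    intro y hy i
    have h1 := (hx i).1; have h2 := (hx i).2
    have h3 := (hx' i).1; have h4 := (hx' i).2
    obtain ⟨a, b⟩ := dyadic_aux h h3 h4 h1 h2
    exact ⟨le_trans a (hy i).1, lt_of_lt_of_le (hy i).2 b⟩

lemma IsDyadicCube.eq_pi {n : ℕ} {Q : Set (EuclideanSpace ℝ (Fin n))} (j : ℤ) (k : Fin n → ℤ)
    (hQ : Q = {x : EuclideanSpace ℝ (Fin n) |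
      ∀ i, x i ∈ Set.Ico ((2:ℝ) ^ (-j) * k i) ((2:ℝ) ^ (-j) * (k i + 1))}) :
    Q = (MeasurableEquiv.toLp 2 (Fin n → ℝ)).symm ⁻¹'
      (Set.univ.pi fun i => Set.Ico ((2:ℝ) ^ (-j) * k i) ((2:ℝ) ^ (-j) * (k i + 1))) := by
  rw [hQ]; ext x; simp [Set.mem_pi, MeasurableEquiv.coe_toLp_symm]

lemma IsDyadicCube.measurableSet {n : ℕ} {Q : Set (EuclideanSpace ℝ (Fin n))}
    (hQ : IsDyadicCube Q) : MeasurableSet Q := by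
  obtain ⟨j, k, h⟩ := hQ
  rw [IsDyadicCube.eq_pi j k h]
  exact (MeasurableEquiv.toLp 2 (Fin n → ℝ)).symm.measurable
    (MeasurableSet.univ_pi fun i => measurableSet_Ico)

lemma IsDyadicCube.volume_eq {n : ℕ} {Q : Set (EuclideanSpace ℝ (Fin n))}
    (hQ : IsDyadicCube Q) : ∃ j : ℤ, volume Q = ENNReal.ofReal ((2:ℝ)^(-j)) ^ n := by
  obtain ⟨j, k, h⟩ := hQ
  refine ⟨j, ?_⟩
  rw [IsDyadicCube.eq_pi j k h,
    (EuclideanSpace.volume_preserving_symm_measurableEquiv_toLp (Fin n)).measure_preimage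
      (MeasurableSet.univ_pi fun i => measurableSet_Ico).nullMeasurableSet,
    volume_pi_pi]
  simp only [Real.volume_Ico]
  have : ∀ i : Fin n, ENNReal.ofReal ((2:ℝ) ^ (-j) * (↑(k i) + 1) - (2:ℝ)^(-j) * ↑(k i))
      = ENNReal.ofReal ((2:ℝ)^(-j)) := by
    intro i; congr 1; ring
  rw [Finset.prod_congr rfl (fun i _ => this i), Finset.prod_const]
  simp

lemma IsDyadicCube.volume_pos {n : ℕ} {Q : Set (EuclideanSpace ℝ (Fin n))}
    (hQ : IsDyadicCube Q) : 0 < volume Q := by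
  obtain ⟨j, hj⟩ := hQ.volume_eq
  rw [hj]
  positivity

lemma IsDyadicCube.volume_lt_top {n : ℕ} {Q : Set (EuclideanSpace ℝ (Fin n))}
    (hQ : IsDyadicCube Q) : volume Q < ⊤ := by
  obtain ⟨j, hj⟩ := hQ.volume_eq
  rw [hj]
  exact ENNReal.pow_lt_top ENNReal.ofReal_lt_top



lemma real_key {p : ℝ} (hp0 : 0 < p) (hp1 : p ≤ 1) {γ α : ℝ} (hγ : 0 ≤ γ) (hα : 0 ≤ α) :
    p * (γ * (γ + α) ^ (p - 1)) + α ^ p ≤ (γ + α) ^ p := by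
  rcases eq_or_lt_of_le (by linarith : (0:ℝ) ≤ γ + α) with h | hβ
  · have hγ0 : γ = 0 := by linarith
    have hα0 : α = 0 := by linarith
    subst hγ0; subst hα0
    simp [Real.zero_rpow hp0.ne']
  · set β := γ + α with hβdef
    set t := α / β with ht
    have ht0 : 0 ≤ t := div_nonneg hα hβ.le
    have hαtβ : α = t * β := by rw [ht, div_mul_cancel₀ _ hβ.ne']
    have hgm : t ^ p * 1 ^ (1 - p) ≤ p * t + (1 - p) * 1 :=
      Real.geom_mean_le_arith_mean2_weighted hp0.le (by linarith) ht0 zero_le_one (by ring)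
    rw [Real.one_rpow, mul_one, mul_one] at hgm
    have hbp : (0:ℝ) ≤ β ^ p := Real.rpow_nonneg hβ.le _
    have hαp : α ^ p = t ^ p * β ^ p := by
      rw [hαtβ, Real.mul_rpow ht0 hβ.le]
    have hβsplit : β ^ p = β * β ^ (p - 1) := by
      have : β ^ p = β ^ (1 + (p - 1)) := by ring_nf
      rw [this, Real.rpow_add hβ, Real.rpow_one]
    have h1 : α ^ p ≤ (p * t + (1 - p)) * β ^ p := by
      rw [hαp]
      exact mul_le_mul_of_nonneg_right hgm hbp
    have h2 : t * β ^ p = α * β ^ (p - 1) := by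
      rw [hβsplit, ← mul_assoc, ← hαtβ]
    have h2p : p * (t * β ^ p) = p * (α * β ^ (p - 1)) := by rw [h2]
    have hsplitp : p * β ^ p = p * (β * β ^ (p - 1)) := by rw [← hβsplit]
    have h3 : γ = β - α := by rw [hβdef]; ring
    rw [h3]
    nlinarith [h1, h2p, hsplitp]

lemma ennreal_key {p : ℝ} (hp0 : 0 < p) (hp1 : p ≤ 1) {c a : ℝ≥0∞} (hc : c ≠ ⊤) (ha : a ≠ ⊤) :
    ENNReal.ofReal p * (c * (c + a) ^ (p - 1)) + a ^ p ≤ (c + a) ^ p := by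
  rcases eq_or_ne (c + a) 0 with hb | hb
  · rcases add_eq_zero.mp hb with ⟨rfl, rfl⟩
    simp [ENNReal.zero_rpow_of_pos hp0]
  · have hb' : c + a ≠ ⊤ := by
      simp [ENNReal.add_ne_top, hc, ha]
    set γ := c.toReal with hγdef
    set α := a.toReal with hαdef
    have hγ0 : 0 ≤ γ := ENNReal.toReal_nonneg
    have hα0 : 0 ≤ α := ENNReal.toReal_nonneg
    have hsum : c + a = ENNReal.ofReal (γ + α) := by
      rw [ENNReal.ofReal_add hγ0 hα0, ENNReal.ofReal_toReal hc, ENNReal.ofReal_toReal ha]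
    have hβpos : 0 < γ + α := by
      rcases eq_or_lt_of_le (by linarith : (0:ℝ) ≤ γ + α) with h | h
      · exfalso; apply hb; rw [hsum, ← h, ENNReal.ofReal_zero]
      · exact h
    have hc' : c = ENNReal.ofReal γ := (ENNReal.ofReal_toReal hc).symm
    have ha' : a = ENNReal.ofReal α := (ENNReal.ofReal_toReal ha).symm
    calc ENNReal.ofReal p * (c * (c + a) ^ (p - 1)) + a ^ p
        = ENNReal.ofReal (p * (γ * (γ + α) ^ (p - 1)) + α ^ p) := by
          rw [hsum, hc', ha', ENNReal.ofReal_rpow_of_pos hβpos,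
            ENNReal.ofReal_rpow_of_nonneg hα0 hp0.le,
            ← ENNReal.ofReal_mul hγ0, ← ENNReal.ofReal_mul hp0.le,
            ← ENNReal.ofReal_add (by positivity) (by positivity)]
      _ ≤ ENNReal.ofReal ((γ + α) ^ p) :=
          ENNReal.ofReal_le_ofReal (real_key hp0 hp1 hγ0 hα0)
      _ = (c + a) ^ p := by rw [hsum, ENNReal.ofReal_rpow_of_pos hβpos]

lemma chain_sum_le {X : Type*} {p : ℝ} (hp0 : 0 < p) (hp1 : p ≤ 1)
    (S : Finset (Set X)) (A : Set X → ℝ≥0∞)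
    (hA : ∀ Q ∈ S, A Q ≠ ⊤)
    (hchain : ∀ Q ∈ S, ∀ Q' ∈ S, Q ⊆ Q' ∨ Q' ⊆ Q) :
    ENNReal.ofReal p *
      ∑ Q ∈ S, A Q * (∑ Q' ∈ S.filter (fun Q' => Q ⊆ Q'), A Q') ^ (p - 1)
      ≤ (∑ Q ∈ S, A Q) ^ p := by
  revert hA hchain
  induction S using Finset.strongInduction with
  | _ S ih =>
    intro hA hchain
    rcases S.eq_empty_or_nonempty with rfl | hne
    · simp
    · obtain ⟨Q₀, hQ₀, hmin⟩ := S.exists_minimal hne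
      have hle : ∀ b ∈ S, Q₀ ⊆ b := by
        intro b hb
        rcases hchain Q₀ hQ₀ b hb with h | h
        · exact h
        · rcases eq_or_ne b Q₀ with rfl | hne'
          · exact subset_rfl
          · exact absurd (subset_antisymm h (hmin hb h)) hne'
      have hS'sub : S.erase Q₀ ⊂ S := Finset.erase_ssubset hQ₀
      have hfilter0 : S.filter (fun Q' => Q₀ ⊆ Q') = S :=
        Finset.filter_true_of_mem fun b hb => hle b hb
      have hfilter : ∀ Q ∈ S.erase Q₀,
          S.filter (fun Q' => Q ⊆ Q') = (S.erase Q₀).filter (fun Q' => Q ⊆ Q') := by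
        intro Q hQ
        apply Finset.ext
        intro b
        simp only [Finset.mem_filter, Finset.mem_erase]
        constructor
        · rintro ⟨hbS, hQb⟩
          refine ⟨⟨?_, hbS⟩, hQb⟩
          rintro rfl
          exact (Finset.ne_of_mem_erase hQ)
            (subset_antisymm hQb (hle Q (Finset.mem_of_mem_erase hQ)))
        · rintro ⟨⟨_, hbS⟩, hQb⟩; exact ⟨hbS, hQb⟩
      have hsum : ∑ Q ∈ S, A Q = A Q₀ + ∑ Q ∈ S.erase Q₀, A Q :=
        (Finset.add_sum_erase _ _ hQ₀).symm
      have hTne : ∑ Q ∈ S.erase Q₀, A Q ≠ ⊤ := by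
        refine (ENNReal.sum_lt_top.mpr fun Q hQ => ?_).ne
        exact (hA Q (Finset.mem_of_mem_erase hQ)).lt_top
      have hbig : ∑ Q ∈ S, A Q * (∑ Q' ∈ S.filter (fun Q' => Q ⊆ Q'), A Q') ^ (p - 1)
          = A Q₀ * (A Q₀ + ∑ Q ∈ S.erase Q₀, A Q) ^ (p - 1)
            + ∑ Q ∈ S.erase Q₀,
                A Q * (∑ Q' ∈ (S.erase Q₀).filter (fun Q' => Q ⊆ Q'), A Q') ^ (p - 1) := by
        rw [← Finset.add_sum_erase _ _ hQ₀, hfilter0, hsum]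
        congr 1
        exact Finset.sum_congr rfl fun Q hQ => by rw [hfilter Q hQ]
      rw [hbig, hsum, mul_add]
      have hIH := ih (S.erase Q₀) hS'sub (fun Q hQ => hA Q (Finset.mem_of_mem_erase hQ))
        (fun Q hQ Q' hQ' => hchain Q (Finset.mem_of_mem_erase hQ) Q' (Finset.mem_of_mem_erase hQ'))
      calc ENNReal.ofReal p * (A Q₀ * (A Q₀ + ∑ Q ∈ S.erase Q₀, A Q) ^ (p - 1))
            + ENNReal.ofReal p *
              ∑ Q ∈ S.erase Q₀,
                A Q * (∑ Q' ∈ (S.erase Q₀).filter (fun Q' => Q ⊆ Q'), A Q') ^ (p - 1)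
          ≤ ENNReal.ofReal p * (A Q₀ * (A Q₀ + ∑ Q ∈ S.erase Q₀, A Q) ^ (p - 1))
            + (∑ Q ∈ S.erase Q₀, A Q) ^ p := add_le_add_right hIH _
        _ ≤ (A Q₀ + ∑ Q ∈ S.erase Q₀, A Q) ^ p := ennreal_key hp0 hp1 (hA Q₀ hQ₀) hTne


lemma core_bound {n : ℕ} {p : ℝ} (hp0 : 0 < p) (hp1 : p ≤ 1)
    (J : Finset (Set (EuclideanSpace ℝ (Fin n))))
    (f : Set (EuclideanSpace ℝ (Fin n)) → EuclideanSpace ℝ (Fin n) → ℝ)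
    (hdy : ∀ Q ∈ J, IsDyadicCube Q)
    (hnn : ∀ Q ∈ J, ∀ x, 0 ≤ f Q x)
    (hint : ∀ Q ∈ J, Integrable (f Q))
    (hsupp : ∀ Q ∈ J, Function.support (f Q) ⊆ Q)
    (a : Set (EuclideanSpace ℝ (Fin n)) → ℝ)
    (ha : ∀ Q ∈ J, a Q = (volume Q).toReal⁻¹ * ∫ y in Q, f Q y) :
    ∫⁻ x, (∑ Q ∈ J, ENNReal.ofReal (f Q x)) ^ p ≤
      ((ENNReal.ofReal p)⁻¹) ^ p *
        ∫⁻ x, (∑ Q ∈ J, Q.indicator (fun _ => ENNReal.ofReal (a Q)) x) ^ p := by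
  have hmeasQ : ∀ Q ∈ J, MeasurableSet Q := fun Q hQ => (hdy Q hQ).measurableSet
  have hv0 : ∀ Q ∈ J, volume Q ≠ 0 := fun Q hQ => (hdy Q hQ).volume_pos.ne'
  have hvt : ∀ Q ∈ J, volume Q ≠ ⊤ := fun Q hQ => (hdy Q hQ).volume_lt_top.ne
  have hanon : ∀ Q ∈ J, 0 ≤ a Q := by
    intro Q hQ
    rw [ha Q hQ]
    have h0 : 0 ≤ ∫ y in Q, f Q y :=
      setIntegral_nonneg (hmeasQ Q hQ) fun y _ => hnn Q hQ y
    positivity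
  have hsint : ∀ Q ∈ J, ∫ y in Q, f Q y = ∫ y, f Q y := by
    intro Q hQ
    rw [← MeasureTheory.integral_indicator (hmeasQ Q hQ),
      Set.indicator_eq_self.mpr (hsupp Q hQ)]
  -- lintegral of f Q
  have hIQ : ∀ Q ∈ J, ∫⁻ x, ENNReal.ofReal (f Q x) = ENNReal.ofReal (a Q) * volume Q := by
    intro Q hQ
    have h1 : ENNReal.ofReal (∫ y, f Q y) = ∫⁻ x, ENNReal.ofReal (f Q x) :=
      MeasureTheory.ofReal_integral_eq_lintegral_ofReal (hint Q hQ)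
        (Filter.Eventually.of_forall (hnn Q hQ))
    have h2 : ENNReal.ofReal (a Q) = (volume Q)⁻¹ * ENNReal.ofReal (∫ y, f Q y) := by
      rw [ha Q hQ, hsint Q hQ, ENNReal.ofReal_mul (inv_nonneg.mpr ENNReal.toReal_nonneg),
        ENNReal.ofReal_inv_of_pos (ENNReal.toReal_pos (hv0 Q hQ) (hvt Q hQ)),
        ENNReal.ofReal_toReal (hvt Q hQ)]
    rw [← h1, h2, mul_comm ((volume Q)⁻¹) _, mul_assoc,
      ENNReal.inv_mul_cancel (hv0 Q hQ) (hvt Q hQ), mul_one]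
  set J' : Finset (Set (EuclideanSpace ℝ (Fin n))) := J.filter (fun Q => 0 < a Q) with hJ'def
  have hJ'sub : J' ⊆ J := Finset.filter_subset _ _
  have hapos : ∀ Q ∈ J', 0 < a Q := fun Q hQ => (Finset.mem_filter.mp hQ).2
  have hz : ∀ Q ∈ J, Q ∉ J' → f Q =ᵐ[volume] 0 := by
    intro Q hQ hQn
    have hnotpos : ¬ 0 < a Q := fun h => hQn (Finset.mem_filter.mpr ⟨hQ, h⟩)
    have haQ : a Q = 0 := le_antisymm (not_lt.mp hnotpos) (hanon Q hQ)
    have hIf : ∫ y, f Q y = 0 := by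
      have h1 : (volume Q).toReal⁻¹ * ∫ y in Q, f Q y = 0 := by rw [← ha Q hQ]; exact haQ
      have h2 : (volume Q).toReal⁻¹ ≠ 0 := by
        have := ENNReal.toReal_pos (hv0 Q hQ) (hvt Q hQ); positivity
      have h3 : ∫ y in Q, f Q y = 0 := by
        rcases mul_eq_zero.mp h1 with h | h
        · exact absurd h h2
        · exact h
      rw [← hsint Q hQ]; exact h3
    exact (integral_eq_zero_iff_of_nonneg (hnn Q hQ) (hint Q hQ)).mp hIf
  -- the relevant ENNReal-valued functions
  set F : EuclideanSpace ℝ (Fin n) → ℝ≥0∞ := fun x => ∑ Q ∈ J', ENNReal.ofReal (f Q x)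
    with hFdef
  set g : EuclideanSpace ℝ (Fin n) → ℝ≥0∞ :=
    fun x => ∑ Q ∈ J, Q.indicator (fun _ => ENNReal.ofReal (a Q)) x with hgdef
  set G : Set (EuclideanSpace ℝ (Fin n)) → ℝ≥0∞ :=
    fun Q => ∑ Q' ∈ J'.filter (fun Q' => Q ⊆ Q'), ENNReal.ofReal (a Q') with hGdef
  set h : EuclideanSpace ℝ (Fin n) → ℝ≥0∞ :=
    fun x => ∑ Q ∈ J', Q.indicator (fun _ => ENNReal.ofReal (a Q) * G Q ^ (p - 1)) x with hhdef
  -- measurability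
  have hmeas_g : Measurable g :=
    Finset.measurable_sum _ fun Q hQ => measurable_const.indicator (hmeasQ Q hQ)
  have hmeas_h : Measurable h :=
    Finset.measurable_sum _ fun Q hQ => measurable_const.indicator (hmeasQ Q (hJ'sub hQ))
  have haemf : ∀ Q ∈ J', AEMeasurable (fun x => ENNReal.ofReal (f Q x)) volume := fun Q hQ =>
    ENNReal.measurable_ofReal.comp_aemeasurable (hint Q (hJ'sub hQ)).aemeasurable
  have hmeas_F : AEMeasurable F volume := Finset.aemeasurable_fun_sum _ haemf
  -- a.e. equality of the two numerator functions
  have h_IF : ∫⁻ x, (∑ Q ∈ J, ENNReal.ofReal (f Q x)) ^ p = ∫⁻ x, F x ^ p := by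
    apply lintegral_congr_ae
    have hae : ∀ᵐ x ∂volume, ∀ Q ∈ (↑J : Set (Set (EuclideanSpace ℝ (Fin n)))),
        (Q ∉ J' → f Q x = 0) := by
      rw [ae_ball_iff J.countable_toSet]
      intro Q hQ
      by_cases hQ' : Q ∈ J'
      · exact Filter.Eventually.of_forall fun x hn => absurd hQ' hn
      · exact (hz Q hQ hQ').mono fun x hx _ => hx
    filter_upwards [hae] with x hx
    have : ∑ Q ∈ J', ENNReal.ofReal (f Q x) = ∑ Q ∈ J, ENNReal.ofReal (f Q x) :=
      Finset.sum_subset hJ'sub fun Q hQ hQn => by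
        rw [hx Q hQ hQn, ENNReal.ofReal_zero]
    rw [← this]
  -- pointwise facts
  have hfin_g : ∀ x, g x ≠ ⊤ := by
    intro x
    refine (ENNReal.sum_lt_top.mpr fun Q hQ => ?_).ne
    exact lt_of_le_of_lt (Set.indicator_le_self' (fun _ _ => zero_le) x)
      ENNReal.ofReal_lt_top
  have hpos_g : ∀ x, F x ≠ 0 → g x ≠ 0 := by
    intro x hF
    have : ∃ Q ∈ J', ENNReal.ofReal (f Q x) ≠ 0 := by
      by_contra hcon
      push_neg at hcon
      exact hF (Finset.sum_eq_zero hcon)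
    obtain ⟨Q, hQ, hfx⟩ := this
    have hxQ : x ∈ Q := hsupp Q (hJ'sub hQ) (by
      simp only [Function.mem_support]
      intro h0
      exact hfx (by rw [h0, ENNReal.ofReal_zero]))
    have h1 : ENNReal.ofReal (a Q) ≤ g x := by
      have hle := Finset.single_le_sum
        (f := fun Q' => Q'.indicator (fun _ => ENNReal.ofReal (a Q')) x)
        (fun Q' _ => zero_le) (hJ'sub hQ)
      simpa [Set.indicator_of_mem hxQ] using hle
    intro h0
    rw [h0] at h1
    have := le_antisymm h1 (zero_le)
    rw [ENNReal.ofReal_eq_zero] at this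
    exact absurd this (not_le.mpr (hapos Q hQ))
  have hGle : ∀ Q ∈ J', ∀ x ∈ Q, G Q ≤ g x := by
    intro Q hQ x hxQ
    have h1 : G Q = ∑ Q' ∈ J'.filter (fun Q' => Q ⊆ Q'),
        Q'.indicator (fun _ => ENNReal.ofReal (a Q')) x := by
      rw [hGdef]
      refine Finset.sum_congr rfl fun Q' hQ' => ?_
      have hsub : Q ⊆ Q' := (Finset.mem_filter.mp hQ').2
      rw [Set.indicator_of_mem (hsub hxQ)]
    rw [h1]
    exact Finset.sum_le_sum_of_subset
      ((Finset.filter_subset _ _).trans hJ'sub)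
  -- antitone rpow with exponent p - 1 ≤ 0
  have hrp : ∀ x y : ℝ≥0∞, x ≤ y → y ^ (p - 1) ≤ x ^ (p - 1) := by
    intro x y hxy
    have h1 : p - 1 = -(1 - p) := by ring
    rw [h1, ENNReal.rpow_neg, ENNReal.rpow_neg]
    exact ENNReal.inv_le_inv.mpr (ENNReal.rpow_le_rpow hxy (by linarith))
  -- step 3 : ∫ F g^{p-1} ≤ ∫ h
  have hstep3 : ∫⁻ x, F x * g x ^ (p - 1) ≤ ∫⁻ x, h x := by
    have e1 : ∀ x, F x * g x ^ (p - 1)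
        = ∑ Q ∈ J', ENNReal.ofReal (f Q x) * g x ^ (p - 1) := by
      intro x; rw [hFdef, Finset.sum_mul]
    rw [lintegral_congr e1]
    rw [MeasureTheory.lintegral_finset_sum' (f := fun Q x => ENNReal.ofReal (f Q x) * g x ^ (p - 1)) _ fun Q hQ =>
      (haemf Q hQ).mul ((hmeas_g.pow_const (p - 1)).aemeasurable)]
    have e2 : ∫⁻ x, h x = ∑ Q ∈ J', (ENNReal.ofReal (a Q) * G Q ^ (p - 1)) * volume Q := by
      rw [hhdef]
      rw [MeasureTheory.lintegral_finset_sum _ fun Q hQ =>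
        measurable_const.indicator (hmeasQ Q (hJ'sub hQ))]
      refine Finset.sum_congr rfl fun Q hQ => ?_
      rw [lintegral_indicator (hmeasQ Q (hJ'sub hQ)), setLIntegral_const]
    rw [e2]
    refine Finset.sum_le_sum fun Q hQ => ?_
    have hb : ∫⁻ x, ENNReal.ofReal (f Q x) * g x ^ (p - 1)
        ≤ ∫⁻ x, ENNReal.ofReal (f Q x) * G Q ^ (p - 1) := by
      refine lintegral_mono fun x => ?_
      by_cases hfx : f Q x = 0
      · simp [hfx]
      · have hxQ : x ∈ Q := hsupp Q (hJ'sub hQ) hfx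
        exact mul_le_mul_right (hrp _ _ (hGle Q hQ x hxQ)) _
    refine hb.trans ?_
    rw [lintegral_mul_const'' _ (haemf Q hQ), hIQ Q (hJ'sub hQ)]
    ring_nf
    exact le_of_eq (by ring)
  -- step 5 : pointwise key inequality
  have hkey : ∀ x, ENNReal.ofReal p * h x ≤ g x ^ p := by
    intro x
    set S : Finset (Set (EuclideanSpace ℝ (Fin n))) := J'.filter (fun Q => x ∈ Q) with hSdef
    have hhx : h x = ∑ Q ∈ S, ENNReal.ofReal (a Q) * G Q ^ (p - 1) := by
      rw [hSdef, Finset.sum_filter, hhdef]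
      exact Finset.sum_congr rfl fun Q _ => Set.indicator_apply _ _ _
    have hGS : ∀ Q ∈ S, G Q = ∑ Q' ∈ S.filter (fun Q' => Q ⊆ Q'), ENNReal.ofReal (a Q') := by
      intro Q hQ
      obtain ⟨hQJ', hxQ⟩ := Finset.mem_filter.mp hQ
      have e : S.filter (fun Q' => Q ⊆ Q') = J'.filter (fun Q' => Q ⊆ Q') := by
        rw [hSdef, Finset.filter_filter]
        refine Finset.filter_congr fun Q' hQ' => ?_
        constructor
        · rintro ⟨_, hs⟩; exact hs
        · intro hs; exact ⟨hs hxQ, hs⟩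
      rw [e, hGdef]
    have hchainS : ∀ Q ∈ S, ∀ Q' ∈ S, Q ⊆ Q' ∨ Q' ⊆ Q := by
      intro Q hQ Q' hQ'
      obtain ⟨hQJ', hxQ⟩ := Finset.mem_filter.mp hQ
      obtain ⟨hQ'J', hxQ'⟩ := Finset.mem_filter.mp hQ'
      exact IsDyadicCube.nested (hdy Q (hJ'sub hQJ')) (hdy Q' (hJ'sub hQ'J')) hxQ hxQ'
    have hchain := chain_sum_le hp0 hp1 S (fun Q => ENNReal.ofReal (a Q))
      (fun Q _ => ENNReal.ofReal_ne_top) hchainS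
    have e3 : ∑ Q ∈ S, ENNReal.ofReal (a Q)
        * (∑ Q' ∈ S.filter (fun Q' => Q ⊆ Q'), ENNReal.ofReal (a Q')) ^ (p - 1)
        = ∑ Q ∈ S, ENNReal.ofReal (a Q) * G Q ^ (p - 1) :=
      Finset.sum_congr rfl fun Q hQ => by rw [hGS Q hQ]
    rw [e3] at hchain
    rw [hhx]
    refine hchain.trans (ENNReal.rpow_le_rpow ?_ hp0.le)
    have e4 : ∑ Q ∈ S, ENNReal.ofReal (a Q)
        = ∑ Q ∈ S, Q.indicator (fun _ => ENNReal.ofReal (a Q)) x := by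
      refine Finset.sum_congr rfl fun Q hQ => ?_
      rw [Set.indicator_of_mem (Finset.mem_filter.mp hQ).2]
    rw [e4, hgdef]
    exact Finset.sum_le_sum_of_subset ((Finset.filter_subset _ _).trans hJ'sub)
  -- step 6
  have hstep6 : ENNReal.ofReal p * ∫⁻ x, h x ≤ ∫⁻ x, g x ^ p := by
    rw [← lintegral_const_mul _ hmeas_h]
    exact lintegral_mono hkey
  have hIu : ENNReal.ofReal p * ∫⁻ x, F x * g x ^ (p - 1) ≤ ∫⁻ x, g x ^ p :=
    le_trans (mul_le_mul_right hstep3 _) hstep6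
  have hp'0 : (ENNReal.ofReal p) ≠ 0 := (ENNReal.ofReal_pos.mpr hp0).ne'
  have hp't : (ENNReal.ofReal p) ≠ ⊤ := ENNReal.ofReal_ne_top
  have hIu' : ∫⁻ x, F x * g x ^ (p - 1) ≤ (ENNReal.ofReal p)⁻¹ * ∫⁻ x, g x ^ p := by
    rw [← one_mul (∫⁻ x, F x * g x ^ (p - 1)), ← ENNReal.inv_mul_cancel hp'0 hp't, mul_assoc]
    exact mul_le_mul_right hIu _
  rw [h_IF]
  -- main bound
  rcases eq_or_lt_of_le hp1 with hpe | hplt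
  · -- p = 1
    subst hpe
    have e : ∀ x, F x ^ (1:ℝ) = F x * g x ^ ((1:ℝ) - 1) := by
      intro x; rw [sub_self, ENNReal.rpow_zero, mul_one, ENNReal.rpow_one]
    rw [lintegral_congr e]
    refine hIu'.trans (le_of_eq ?_)
    simp [ENNReal.ofReal_one, hgdef]
  · -- p < 1
    set Iu := ∫⁻ x, F x * g x ^ (p - 1) with hIudef
    set Ig := ∫⁻ x, g x ^ p with hIgdef
    have hHolder : ∫⁻ x, F x ^ p ≤ Iu ^ p * Ig ^ (1 - p) := by
      have hconj : (1/p).HolderConjugate (1/(1-p)) := by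
        refine Real.holderConjugate_iff.mpr ⟨?_, ?_⟩
        · exact one_lt_one_div hp0 hplt
        · rw [one_div, one_div, inv_inv, inv_inv]; ring
      have hf₁ : AEMeasurable (fun x => (F x * g x ^ (p - 1)) ^ p) volume :=
        ((hmeas_F.mul (hmeas_g.pow_const (p - 1)).aemeasurable).pow_const p)
      have hf₂ : AEMeasurable (fun x => g x ^ (p * (1 - p))) volume :=
        (hmeas_g.pow_const (p * (1 - p))).aemeasurable
      have hH := ENNReal.lintegral_mul_le_Lp_mul_Lq volume hconj hf₁ hf₂
      have he1 : ∀ x, ((F x * g x ^ (p - 1)) ^ p) ^ (1/p) = F x * g x ^ (p - 1) := by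
        intro x
        rw [← ENNReal.rpow_mul, mul_one_div_cancel hp0.ne', ENNReal.rpow_one]
      have he2 : ∀ x, (g x ^ (p * (1 - p))) ^ (1/(1-p)) = g x ^ p := by
        intro x
        have h1p : (1:ℝ) - p ≠ 0 := by linarith
        rw [← ENNReal.rpow_mul, mul_assoc, mul_one_div, div_self h1p, mul_one]
      have hptw : ∀ x, F x ^ p ≤ (F x * g x ^ (p - 1)) ^ p * g x ^ (p * (1 - p)) := by
        intro x
        by_cases h0 : g x = 0
        · have hF0 : F x = 0 := by
            by_contra hne
            exact (hpos_g x hne) h0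
          rw [hF0, ENNReal.zero_rpow_of_pos hp0]
          exact zero_le
        · apply le_of_eq
          rw [ENNReal.mul_rpow_of_nonneg _ _ hp0.le]
          have e1 : (g x ^ (p-1)) ^ p = g x ^ ((p-1)*p) := (ENNReal.rpow_mul _ _ _).symm
          have e2 : g x ^ ((p-1)*p) * g x ^ (p*(1-p)) = g x ^ ((p-1)*p + p*(1-p)) :=
            (ENNReal.rpow_add _ _ h0 (hfin_g x)).symm
          have e3 : (p-1)*p + p*(1-p) = 0 := by ring
          rw [mul_assoc, e1, e2, e3, ENNReal.rpow_zero, mul_one]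
      calc ∫⁻ x, F x ^ p
          ≤ ∫⁻ x, (F x * g x ^ (p - 1)) ^ p * g x ^ (p * (1 - p)) := lintegral_mono hptw
        _ ≤ (∫⁻ x, ((F x * g x ^ (p - 1)) ^ p) ^ (1/p)) ^ (1/(1/p))
              * (∫⁻ x, (g x ^ (p * (1 - p))) ^ (1/(1-p))) ^ (1/(1/(1-p))) := hH
        _ = Iu ^ p * Ig ^ (1 - p) := by
            rw [lintegral_congr he1, lintegral_congr he2, one_div_one_div, one_div_one_div]
    rcases eq_or_ne Ig 0 with hIg0 | hIg0
    · have hIu0 : Iu = 0 := by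
        have := hIu'
        rw [hIg0, mul_zero] at this
        exact le_antisymm this (zero_le)
      refine hHolder.trans (le_of_eq ?_)
      rw [hIu0, hIg0, ENNReal.zero_rpow_of_pos hp0, zero_mul, mul_zero]
    · rcases eq_or_ne Ig ⊤ with hIgt | hIgt
      · refine le_top.trans (le_of_eq ?_)
        rw [hIgt, ENNReal.mul_top]
        exact (ENNReal.rpow_pos (ENNReal.inv_pos.mpr hp't) (ENNReal.inv_ne_top.mpr hp'0)).ne'
      · calc ∫⁻ x, F x ^ p ≤ Iu ^ p * Ig ^ (1 - p) := hHolder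
          _ ≤ ((ENNReal.ofReal p)⁻¹ * Ig) ^ p * Ig ^ (1 - p) :=
              mul_le_mul_left (ENNReal.rpow_le_rpow hIu' hp0.le) _
          _ = ((ENNReal.ofReal p)⁻¹) ^ p * Ig := by
              rw [ENNReal.mul_rpow_of_nonneg _ _ hp0.le, mul_assoc,
                ← ENNReal.rpow_add _ _ hIg0 hIgt]
              norm_num

/-- Lemma 2 of Grafakos–Kalton: for a finite collection of dyadic cubes `Q ∈ 𝒥` and
nonnegative integrable functions `f_Q` supported in `Q`,
`‖∑ f_Q‖_{L^p} ≤ C(p) ‖∑ a_Q χ_Q‖_{L^p}` where `a_Q = |Q|⁻¹ ∫_Q f_Q`. -/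
theorem stmt0 (p : ℝ) (hp0 : 0 < p) (hp1 : p ≤ 1) :
    ∃ C : ℝ, 0 < C ∧ ∀ (n : ℕ), 1 ≤ n →
      ∀ (J : Finset (Set (EuclideanSpace ℝ (Fin n))))
        (f : Set (EuclideanSpace ℝ (Fin n)) → EuclideanSpace ℝ (Fin n) → ℝ),
        (∀ Q ∈ J, IsDyadicCube Q) →
        (∀ Q ∈ J, ∀ x, 0 ≤ f Q x) →
        (∀ Q ∈ J, Integrable (f Q)) →
        (∀ Q ∈ J, Function.support (f Q) ⊆ Q) →
        eLpNorm (fun x => ∑ Q ∈ J, f Q x) (ENNReal.ofReal p) volume ≤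
          ENNReal.ofReal C *
            eLpNorm (fun x => ∑ Q ∈ J,
              ((volume Q).toReal⁻¹ * ∫ y in Q, f Q y) * Q.indicator 1 x)
              (ENNReal.ofReal p) volume := by
  refine ⟨1/p, by positivity, ?_⟩
  intro n hn J f hdy hnn hint hsupp
  have hcore := core_bound hp0 hp1 J f hdy hnn hint hsupp
    (fun Q => (volume Q).toReal⁻¹ * ∫ y in Q, f Q y) (fun Q _ => rfl)
  have hp'0 : (ENNReal.ofReal p) ≠ 0 := (ENNReal.ofReal_pos.mpr hp0).ne'
  have hp't : (ENNReal.ofReal p) ≠ ⊤ := ENNReal.ofReal_ne_top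
  rw [eLpNorm_eq_lintegral_rpow_enorm_toReal hp'0 hp't, eLpNorm_eq_lintegral_rpow_enorm_toReal hp'0 hp't,
    ENNReal.toReal_ofReal hp0.le]
  have hL : ∀ x, ‖∑ Q ∈ J, f Q x‖ₑ ^ p
      = (∑ Q ∈ J, ENNReal.ofReal (f Q x)) ^ p := by
    intro x
    congr 1
    rw [Real.enorm_eq_ofReal (Finset.sum_nonneg fun Q hQ => hnn Q hQ x),
      ENNReal.ofReal_sum_of_nonneg fun Q hQ => hnn Q hQ x]
  have hR : ∀ x, (‖∑ Q ∈ J,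
        ((volume Q).toReal⁻¹ * ∫ y in Q, f Q y) * Q.indicator 1 x‖ₑ) ^ p
      = (∑ Q ∈ J, Q.indicator
          (fun _ => ENNReal.ofReal ((volume Q).toReal⁻¹ * ∫ y in Q, f Q y)) x) ^ p := by
    intro x
    congr 1
    have hnn' : ∀ Q ∈ J, 0 ≤ ((volume Q).toReal⁻¹ * ∫ y in Q, f Q y) * Q.indicator 1 x := by
      intro Q hQ
      have h0 : 0 ≤ ∫ y in Q, f Q y :=
        setIntegral_nonneg (hdy Q hQ).measurableSet fun y _ => hnn Q hQ y
      have h1 : (0:ℝ) ≤ Q.indicator 1 x := Set.indicator_nonneg (fun _ _ => zero_le_one) x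
      positivity
    rw [Real.enorm_eq_ofReal (Finset.sum_nonneg hnn'), ENNReal.ofReal_sum_of_nonneg hnn']
    refine Finset.sum_congr rfl fun Q hQ => ?_
    by_cases hxQ : x ∈ Q
    · simp [Set.indicator_of_mem hxQ]
    · simp [Set.indicator_of_notMem hxQ]
  rw [lintegral_congr hL, lintegral_congr hR]
  calc (∫⁻ x, (∑ Q ∈ J, ENNReal.ofReal (f Q x)) ^ p) ^ (1/p)
      ≤ (((ENNReal.ofReal p)⁻¹) ^ p *
          ∫⁻ x, (∑ Q ∈ J, Q.indicator
            (fun _ => ENNReal.ofReal ((volume Q).toReal⁻¹ * ∫ y in Q, f Q y)) x) ^ p) ^ (1/p) :=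
        ENNReal.rpow_le_rpow hcore (by positivity)
    _ = ENNReal.ofReal (1/p) *
          (∫⁻ x, (∑ Q ∈ J, Q.indicator
            (fun _ => ENNReal.ofReal ((volume Q).toReal⁻¹ * ∫ y in Q, f Q y)) x) ^ p) ^ (1/p) := by
        rw [ENNReal.mul_rpow_of_nonneg _ _ (by positivity : (0:ℝ) ≤ 1/p),
          ← ENNReal.rpow_mul, mul_one_div_cancel hp0.ne', ENNReal.rpow_one,
          one_div, ENNReal.ofReal_inv_of_pos hp0]

end
end

section
/- Let $\mathcal{J}$ be a finite collection of dyadic cubes in $\mathbf{R}^n$, let $a_Q \ge 0$ for each $Q \in \mathcal{J}$, and set $G = \sum_{Q \in \mathcal{J}} a_Q \chi_Q$. Then for every $t \ge 0$ there exist coefficients $\mu_Q^t \in [0,1]$ ($Q \in \mathcal{J}$) such that $\sum_{Q \in \mathcal{J}} \mu_Q^t \, a_Q \chi_Q(x) = \min(t, G(x))$ for every $x \in \mathbf{R}^n$; moreover the coefficients can be chosen so that for each $Q$ the map $t \mapsto \mu_Q^t$ is nondecreasing. -/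
open MeasureTheory Set

noncomputable section

private lemma mem_Ico_iff_floor (j k : ℤ) (y : ℝ) :
    y ∈ Set.Ico ((2:ℝ) ^ (-j) * k) ((2:ℝ) ^ (-j) * (k + 1)) ↔ ⌊(2:ℝ) ^ j * y⌋ = k := by
  have hp : (0:ℝ) < (2:ℝ) ^ j := zpow_pos (by norm_num) j
  have hp' : (0:ℝ) < (2:ℝ) ^ (-j) := zpow_pos (by norm_num) (-j)
  have hq : (2:ℝ) ^ j * (2:ℝ) ^ (-j) = 1 := by
    rw [← zpow_add₀ (by norm_num : (2:ℝ) ≠ 0)]; simp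
  have hq' : (2:ℝ) ^ (-j) * (2:ℝ) ^ j = 1 := by rw [mul_comm]; exact hq
  have key : ∀ u v : ℝ, (2:ℝ) ^ (-j) * u ≤ v ↔ u ≤ (2:ℝ) ^ j * v := by
    intro u v
    constructor
    · intro h
      have := mul_le_mul_of_nonneg_left h hp.le
      rwa [← mul_assoc, hq, one_mul] at this
    · intro h
      have := mul_le_mul_of_nonneg_left h hp'.le
      rwa [← mul_assoc, hq', one_mul] at this
  have key2 : ∀ u v : ℝ, v < (2:ℝ) ^ (-j) * u ↔ (2:ℝ) ^ j * v < u := by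
    intro u v
    rw [← not_le, ← not_le, key]
  rw [Int.floor_eq_iff, Set.mem_Ico, key, key2]

private lemma int_floor_div_pow (r : ℝ) (m : ℕ) (hm : 0 < m) :
    ⌊r / (m : ℝ)⌋ = ⌊r⌋ / (m : ℤ) := by
  have hm' : (0:ℝ) < (m:ℝ) := by exact_mod_cast hm
  have hmz : (0:ℤ) < (m:ℤ) := by exact_mod_cast hm
  have hmod := Int.emod_add_mul_ediv ⌊r⌋ (m : ℤ)
  have hmod0 : 0 ≤ ⌊r⌋ % (m : ℤ) := Int.emod_nonneg _ hmz.ne'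
  have hmod1 : ⌊r⌋ % (m : ℤ) < (m : ℤ) := Int.emod_lt_of_pos _ hmz
  set q : ℤ := ⌊r⌋ / (m : ℤ) with hq
  have h1 : (m : ℤ) * q ≤ ⌊r⌋ := by linarith
  have h2 : ⌊r⌋ < (m : ℤ) * (q + 1) := by
    have hexp : (m:ℤ) * (q + 1) = (m:ℤ) * q + (m:ℤ) := by ring
    linarith
  rw [Int.floor_eq_iff]
  constructor
  · rw [le_div_iff₀ hm']
    have hfl : (⌊r⌋ : ℝ) ≤ r := Int.floor_le r
    have : ((m : ℤ) * q : ℝ) ≤ r := le_trans (by exact_mod_cast h1) hfl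
    push_cast at this ⊢
    linarith
  · rw [div_lt_iff₀ hm']
    have hfl : r < (⌊r⌋ : ℝ) + 1 := Int.lt_floor_add_one r
    have h2' : ((⌊r⌋ : ℝ) + 1) ≤ ((m : ℤ) * (q + 1) : ℝ) := by exact_mod_cast h2
    push_cast at h2' ⊢
    linarith

private lemma floor_scale {j j' : ℤ} (h : j ≤ j') {x y : ℝ}
    (hf : ⌊(2:ℝ) ^ j' * x⌋ = ⌊(2:ℝ) ^ j' * y⌋) : ⌊(2:ℝ) ^ j * x⌋ = ⌊(2:ℝ) ^ j * y⌋ := by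
  set d : ℕ := (j' - j).toNat with hd
  have hdd : (d : ℤ) = j' - j := Int.toNat_of_nonneg (by omega)
  have key : ∀ z : ℝ, (2:ℝ) ^ j * z = ((2:ℝ) ^ j' * z) / ((2 ^ d : ℕ) : ℝ) := by
    intro z
    have h2 : ((2 ^ d : ℕ) : ℝ) = (2:ℝ) ^ ((j' - j : ℤ)) := by
      push_cast
      rw [← zpow_natCast (2:ℝ) d, hdd]
    rw [h2, eq_div_iff (by positivity)]
    have hjj : j + (j' - j) = j' := by omega
    calc (2:ℝ) ^ j * z * (2:ℝ) ^ ((j' - j : ℤ))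
        = (2:ℝ) ^ (j + (j' - j)) * z := by
          rw [zpow_add₀ (by norm_num : (2:ℝ) ≠ 0)]; ring
      _ = (2:ℝ) ^ j' * z := by rw [hjj]
  rw [key x, key y, int_floor_div_pow _ _ (by positivity), int_floor_div_pow _ _ (by positivity), hf]

private lemma dyadic_chain {n : ℕ} {Q R : Set (EuclideanSpace ℝ (Fin n))}
    (hQ : IsDyadicCube Q) (hR : IsDyadicCube R) {x : EuclideanSpace ℝ (Fin n)}
    (hxQ : x ∈ Q) (hxR : x ∈ R) : Q ⊆ R ∨ R ⊆ Q := by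
  obtain ⟨j, k, rfl⟩ := hQ
  obtain ⟨j', k', rfl⟩ := hR
  have main : ∀ (j1 j2 : ℤ) (k1 k2 : Fin n → ℤ) (z : EuclideanSpace ℝ (Fin n)), j1 ≤ j2 →
      (∀ i, z i ∈ Set.Ico ((2:ℝ) ^ (-j1) * k1 i) ((2:ℝ) ^ (-j1) * (k1 i + 1))) →
      (∀ i, z i ∈ Set.Ico ((2:ℝ) ^ (-j2) * k2 i) ((2:ℝ) ^ (-j2) * (k2 i + 1))) →
      {y : EuclideanSpace ℝ (Fin n) |
        ∀ i, y i ∈ Set.Ico ((2:ℝ) ^ (-j2) * k2 i) ((2:ℝ) ^ (-j2) * (k2 i + 1))} ⊆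
      {y : EuclideanSpace ℝ (Fin n) |
        ∀ i, y i ∈ Set.Ico ((2:ℝ) ^ (-j1) * k1 i) ((2:ℝ) ^ (-j1) * (k1 i + 1))} := by
    intro j1 j2 k1 k2 z hle hz1 hz2 y hy i
    rw [mem_Ico_iff_floor]
    have h1 : ⌊(2:ℝ) ^ j2 * y i⌋ = ⌊(2:ℝ) ^ j2 * z i⌋ := by
      rw [(mem_Ico_iff_floor j2 (k2 i) (y i)).mp (hy i),
        (mem_Ico_iff_floor j2 (k2 i) (z i)).mp (hz2 i)]
    rw [floor_scale hle h1, (mem_Ico_iff_floor j1 (k1 i) (z i)).mp (hz1 i)]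
  rcases le_total j j' with h | h
  · exact Or.inr (main j j' k k' x h hxQ hxR)
  · exact Or.inl (main j' j k' k x h hxR hxQ)

private lemma mu_mul (t c a : ℝ) (ha : 0 ≤ a) :
    min 1 (max 0 ((t - c) / a)) * a = min t (c + a) - min t c := by
  rcases ha.eq_or_lt with h | h
  · simp [← h]
  · rcases le_total t c with h1 | h1
    · have hd : (t - c) / a ≤ 0 := div_nonpos_iff.mpr (Or.inr ⟨by linarith, h.le⟩)
      rw [max_eq_left hd, min_eq_right zero_le_one, zero_mul,
        min_eq_left (by linarith : t ≤ c + a), min_eq_left h1]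
      ring
    · rcases le_total t (c + a) with h2 | h2
      · have h0 : 0 ≤ (t - c) / a := div_nonneg (by linarith) h.le
        have hle1 : (t - c) / a ≤ 1 := (div_le_one h).mpr (by linarith)
        rw [max_eq_right h0, min_eq_right hle1, div_mul_cancel₀ _ h.ne',
          min_eq_left h2, min_eq_right h1]
      · have h1' : 1 ≤ (t - c) / a := (one_le_div h).mpr (by linarith)
        rw [max_eq_right (by linarith : (0:ℝ) ≤ (t - c) / a), min_eq_left h1', one_mul,
          min_eq_right h2, min_eq_right (by linarith : c ≤ t)]
        ring

private lemma chain_sum {α : Type*} [∀ (Q R : Set α), Decidable (Q ⊆ R)]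
    (a : Set α → ℝ) (t : ℝ) (ht : 0 ≤ t) :
    ∀ F : Finset (Set α), (∀ Q ∈ F, ∀ R ∈ F, Q ⊆ R ∨ R ⊆ Q) →
      ∑ Q ∈ F, (min t (∑ R ∈ F.filter (fun R => Q ⊆ R), a R) -
        min t ((∑ R ∈ F.filter (fun R => Q ⊆ R), a R) - a Q)) = min t (∑ Q ∈ F, a Q) := by
  classical
  intro F
  induction F using Finset.strongInduction with
  | _ F ih =>
    intro hchain
    rcases F.eq_empty_or_nonempty with rfl | hne
    · simp [min_eq_right ht]
    · obtain ⟨Q₀, hQ₀, hmin⟩ := F.exists_minimal hne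
      have hleast : ∀ R ∈ F, Q₀ ⊆ R := by
        intro R hR
        rcases hchain Q₀ hQ₀ R hR with h | h
        · exact h
        · exact hmin hR h
      have hfQ₀ : F.filter (fun R => Q₀ ⊆ R) = F := Finset.filter_eq_self.mpr hleast
      have hfilter : ∀ Q ∈ F.erase Q₀,
          F.filter (fun R => Q ⊆ R) = (F.erase Q₀).filter (fun R => Q ⊆ R) := by
        intro Q hQ
        rw [Finset.filter_erase, Finset.erase_eq_of_notMem]
        intro hmem
        rw [Finset.mem_filter] at hmem
        have hQne := Finset.ne_of_mem_erase hQ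
        exact hQne (le_antisymm hmem.2 (hleast Q (Finset.mem_of_mem_erase hQ)))
      rw [← Finset.add_sum_erase _ _ hQ₀, ← Finset.add_sum_erase _ a hQ₀, hfQ₀]
      have herase : ∑ Q ∈ F.erase Q₀, (min t (∑ R ∈ F.filter (fun R => Q ⊆ R), a R) -
          min t ((∑ R ∈ F.filter (fun R => Q ⊆ R), a R) - a Q))
          = min t (∑ Q ∈ F.erase Q₀, a Q) := by
        rw [Finset.sum_congr rfl (fun Q hQ => by rw [hfilter Q hQ])]
        exact ih (F.erase Q₀) (Finset.erase_ssubset hQ₀)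
          (fun Q hQ R hR => hchain Q (Finset.mem_of_mem_erase hQ) R (Finset.mem_of_mem_erase hR))
      rw [herase]
      have hT : a Q₀ + ∑ Q ∈ F.erase Q₀, a Q = ∑ Q ∈ F, a Q :=
        Finset.add_sum_erase _ a hQ₀
      have h3 : (∑ Q ∈ F, a Q) - a Q₀ = ∑ Q ∈ F.erase Q₀, a Q := by linarith
      rw [← hT] at h3 ⊢
      rw [h3]
      ring

/-- For a finite collection `𝒥` of dyadic cubes with nonnegative coefficients `a_Q` and
`G = ∑ a_Q χ_Q`, for every `t ≥ 0` there are coefficients `μ_Q^t ∈ [0,1]` with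
`∑ μ_Q^t a_Q χ_Q = min(t, G)` pointwise, chosen nondecreasingly in `t`. -/
theorem stmt2 (n : ℕ) (J : Finset (Set (EuclideanSpace ℝ (Fin n))))
    (hJ : ∀ Q ∈ J, IsDyadicCube Q)
    (a : Set (EuclideanSpace ℝ (Fin n)) → ℝ) (ha : ∀ Q ∈ J, 0 ≤ a Q) :
    ∃ μ : ℝ → Set (EuclideanSpace ℝ (Fin n)) → ℝ,
      (∀ t, 0 ≤ t → ∀ Q ∈ J, μ t Q ∈ Set.Icc (0 : ℝ) 1) ∧
      (∀ t, 0 ≤ t → ∀ x, ∑ Q ∈ J, μ t Q * a Q * Q.indicator 1 x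
          = min t (∑ Q ∈ J, a Q * Q.indicator 1 x)) ∧
      (∀ Q ∈ J, ∀ s t, 0 ≤ s → s ≤ t → μ s Q ≤ μ t Q) := by
  classical
  set S : Set (EuclideanSpace ℝ (Fin n)) → ℝ :=
    fun Q => ∑ R ∈ J.filter (fun R => Q ⊆ R), a R with hS
  refine ⟨fun t Q => min 1 (max 0 ((t - (S Q - a Q)) / a Q)), ?_, ?_, ?_⟩
  · intro t ht Q hQ
    exact ⟨le_min zero_le_one (le_max_left _ _), min_le_left _ _⟩
  · intro t ht x
    have hsum : ∀ f : Set (EuclideanSpace ℝ (Fin n)) → ℝ,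
        ∑ Q ∈ J, f Q * Q.indicator 1 x = ∑ Q ∈ J.filter (fun Q => x ∈ Q), f Q := by
      intro f
      rw [Finset.sum_filter]
      refine Finset.sum_congr rfl fun Q _ => ?_
      by_cases h : x ∈ Q <;> simp [h]
    rw [show (∑ Q ∈ J, min 1 (max 0 ((t - (S Q - a Q)) / a Q)) * a Q * Q.indicator 1 x)
        = ∑ Q ∈ J, (fun Q => min 1 (max 0 ((t - (S Q - a Q)) / a Q)) * a Q) Q * Q.indicator 1 x
        from rfl, hsum, hsum]
    set F := J.filter (fun Q => x ∈ Q) with hF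
    have hmemF : ∀ Q ∈ F, Q ∈ J ∧ x ∈ Q := fun Q hQ => Finset.mem_filter.mp hQ
    have hchain : ∀ Q ∈ F, ∀ R ∈ F, Q ⊆ R ∨ R ⊆ Q := by
      intro Q hQ R hR
      obtain ⟨hQJ, hxQ⟩ := hmemF Q hQ
      obtain ⟨hRJ, hxR⟩ := hmemF R hR
      exact dyadic_chain (hJ Q hQJ) (hJ R hRJ) hxQ hxR
    have hSF : ∀ Q ∈ F, S Q = ∑ R ∈ F.filter (fun R => Q ⊆ R), a R := by
      intro Q hQ
      obtain ⟨hQJ, hxQ⟩ := hmemF Q hQ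
      have heq : F.filter (fun R => Q ⊆ R) = J.filter (fun R => Q ⊆ R) := by
        rw [hF, Finset.filter_filter]
        refine Finset.filter_congr fun R hR => ?_
        simp only [iff_def]
        exact ⟨fun h => h.2, fun h => ⟨h hxQ, h⟩⟩
      rw [heq, hS]
    calc ∑ Q ∈ F, min 1 (max 0 ((t - (S Q - a Q)) / a Q)) * a Q
        = ∑ Q ∈ F, (min t (∑ R ∈ F.filter (fun R => Q ⊆ R), a R) -
            min t ((∑ R ∈ F.filter (fun R => Q ⊆ R), a R) - a Q)) := by
          refine Finset.sum_congr rfl fun Q hQ => ?_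
          rw [mu_mul t (S Q - a Q) (a Q) (ha Q (hmemF Q hQ).1), sub_add_cancel, hSF Q hQ]
      _ = min t (∑ Q ∈ F, a Q) := chain_sum a t ht F hchain
  · intro Q hQ s t hs hst
    simp only
    rcases (ha Q hQ).eq_or_lt with h | h
    · rw [← h]
      simp
    · refine min_le_min le_rfl (max_le_max le_rfl ?_)
      exact div_le_div_of_nonneg_right (by linarith) h.le
end
end

section
/- Let $0 < p \le 1$. There exists a constant $C(p)$, depending only on $p$, with the following property: if $G : \mathbf{R}^n \to [0,\infty]$ is measurable and $(h_j)_{j \in \mathbf{Z}}$ are nonnegative measurable functions on $\mathbf{R}^n$ such that for each $j$ the function $h_j$ vanishes almost everywhere on the set $\{x : G(x) \le 2^{j-1}\}$ and $\int_{\mathbf{R}^n} h_j(x)\,dx \le 2^j \, |\{ x : G(x) > 2^{j-1} \}|$, then $\int_{\mathbf{R}^n} \big( \sum_{j \in \mathbf{Z}} h_j(x) \big)^p dx \le C(p) \int_{\mathbf{R}^n} G(x)^p \, dx$. -/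
open MeasureTheory Set ENNReal

noncomputable section

private lemma tsum_rpow_le_of_le_one {ι : Type*} (f : ι → ℝ≥0∞) {p : ℝ}
    (hp0 : 0 < p) (hp1 : p ≤ 1) : (∑' i, f i) ^ p ≤ ∑' i, f i ^ p := by
  classical
  rw [ENNReal.tsum_eq_iSup_sum,
    Monotone.map_iSup_of_continuousAt (f := fun x : ℝ≥0∞ => x ^ p)
      ENNReal.continuous_rpow_const.continuousAt
      (fun a b hab => ENNReal.rpow_le_rpow hab hp0.le)
      (by simp [ENNReal.zero_rpow_of_pos hp0])]
  refine iSup_le fun s => le_trans ?_ (ENNReal.sum_le_tsum s)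
  induction s using Finset.induction with
  | empty => simp [ENNReal.zero_rpow_of_pos hp0]
  | @insert a s hx ih =>
      rw [Finset.sum_insert hx, Finset.sum_insert hx]
      exact (ENNReal.rpow_add_le_add_rpow _ _ hp0.le hp1).trans (add_le_add_right ih _)

private lemma lintegral_rpow_le_of_support {α : Type*} [MeasurableSpace α] {μ : Measure α}
    {p : ℝ} (hp0 : 0 < p) (hp1 : p ≤ 1) {h : α → ℝ≥0∞} (hm : Measurable h)
    {E : Set α} (hE : MeasurableSet E) (hsupp : ∀ᵐ x ∂μ, x ∉ E → h x = 0) :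
    ∫⁻ x, h x ^ p ∂μ ≤ (∫⁻ x, h x ∂μ) ^ p * μ E ^ (1 - p) := by
  rcases hp1.eq_or_lt with rfl | hplt
  · simp
  · have hpq : (p⁻¹).HolderConjugate ((1 - p)⁻¹) :=
      Real.HolderConjugate.inv_inv hp0 (by linarith) (by ring)
    set f : α → ℝ≥0∞ := fun x => h x ^ p with hf_def
    set g : α → ℝ≥0∞ := E.indicator 1 with hg_def
    have key := ENNReal.lintegral_mul_le_Lp_mul_Lq μ hpq
      (f := f) (g := g)
      (hm.pow_const p).aemeasurable (measurable_one.indicator hE).aemeasurable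
    have heq : ∫⁻ x, h x ^ p ∂μ = ∫⁻ x, (f * g) x ∂μ := by
      refine lintegral_congr_ae ?_
      filter_upwards [hsupp] with x hx
      by_cases hxE : x ∈ E
      · simp [hf_def, hg_def, Set.indicator_of_mem hxE]
      · simp [hf_def, hg_def, Set.indicator_of_notMem hxE, hx hxE,
          ENNReal.zero_rpow_of_pos hp0]
    have h1 : ∫⁻ x, (f x) ^ (p⁻¹) ∂μ = ∫⁻ x, h x ∂μ := by
      refine lintegral_congr fun x => ?_
      rw [hf_def]
      rw [← ENNReal.rpow_mul, mul_inv_cancel₀ hp0.ne', ENNReal.rpow_one]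
    have h2 : ∫⁻ x, (g x) ^ ((1 - p)⁻¹) ∂μ = μ E := by
      rw [← lintegral_indicator_one hE]
      refine lintegral_congr fun x => ?_
      by_cases hxE : x ∈ E
      · simp [hg_def, Set.indicator_of_mem hxE]
      · simp [hg_def, Set.indicator_of_notMem hxE,
          ENNReal.zero_rpow_of_pos (inv_pos.mpr (by linarith : (0:ℝ) < 1 - p))]
    calc ∫⁻ x, h x ^ p ∂μ = ∫⁻ x, (f * g) x ∂μ := heq
      _ ≤ (∫⁻ x, (f x) ^ (p⁻¹) ∂μ) ^ (1 / p⁻¹)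
          * (∫⁻ x, (g x) ^ ((1 - p)⁻¹) ∂μ) ^ (1 / (1 - p)⁻¹) := key
      _ = (∫⁻ x, h x ∂μ) ^ p * μ E ^ (1 - p) := by
          rw [h1, h2, one_div, one_div, inv_inv, inv_inv]

/-- For `0 < p ≤ 1` there is `C(p)` such that: if `G : ℝⁿ → [0,∞]` is measurable and
`(h_j)_{j ∈ ℤ}` are nonnegative measurable functions with `h_j = 0` a.e. on
`{G ≤ 2^{j-1}}` and `∫ h_j ≤ 2^j |{G > 2^{j-1}}|`, then
`∫ (∑_j h_j)^p ≤ C(p) ∫ G^p`. -/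
theorem stmt4 (p : ℝ) (hp0 : 0 < p) (hp1 : p ≤ 1) :
    ∃ C : ℝ, 0 < C ∧ ∀ (n : ℕ) (G : EuclideanSpace ℝ (Fin n) → ℝ≥0∞)
      (h : ℤ → EuclideanSpace ℝ (Fin n) → ℝ≥0∞),
      Measurable G →
      (∀ j, Measurable (h j)) →
      (∀ j : ℤ, ∀ᵐ x ∂volume, G x ≤ (2 : ℝ≥0∞) ^ ((j : ℝ) - 1) → h j x = 0) →
      (∀ j : ℤ, ∫⁻ x, h j x ≤
          (2 : ℝ≥0∞) ^ (j : ℝ) * volume {x | (2 : ℝ≥0∞) ^ ((j : ℝ) - 1) < G x}) →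
      ∫⁻ x, (∑' j : ℤ, h j x) ^ p ≤ ENNReal.ofReal C * ∫⁻ x, G x ^ p := by
  have h2ne0 : (2 : ℝ≥0∞) ≠ 0 := by norm_num
  have h2net : (2 : ℝ≥0∞) ≠ ∞ := by norm_num
  set r : ℝ≥0∞ := (2 : ℝ≥0∞) ^ (-p) with hr_def
  have hr1 : r < 1 := by
    have := ENNReal.rpow_lt_rpow_of_exponent_lt (x := 2) (by norm_num) h2net
      (by linarith : -p < 0)
    simpa [hr_def] using this
  set S : ℝ≥0∞ := ∑' i : ℕ, r ^ i with hS_def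
  have hSne : S ≠ ∞ := by
    rw [hS_def, ENNReal.tsum_geometric]
    exact ENNReal.inv_ne_top.mpr (tsub_pos_of_lt hr1).ne'
  have hS1 : S ≠ 0 := by
    rw [hS_def, ENNReal.tsum_geometric]
    exact ENNReal.inv_ne_zero.mpr (tsub_le_self.trans_lt ENNReal.one_lt_top).ne
  have h2p_pos : (0 : ℝ≥0∞) < (2 : ℝ≥0∞) ^ p := ENNReal.rpow_pos (by norm_num) h2net
  have h2p_net : (2 : ℝ≥0∞) ^ p ≠ ∞ := ENNReal.rpow_ne_top_of_nonneg hp0.le h2net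
  set K : ℝ≥0∞ := (2 : ℝ≥0∞) ^ p * S with hK_def
  have hKne : K ≠ ∞ := ENNReal.mul_ne_top h2p_net hSne
  have hK0 : K ≠ 0 := mul_ne_zero h2p_pos.ne' hS1
  refine ⟨K.toReal, ENNReal.toReal_pos hK0 hKne, ?_⟩
  intro n G h hGm hhm hsupp hint
  rw [ENNReal.ofReal_toReal hKne]
  set μ := (volume : Measure (EuclideanSpace ℝ (Fin n))) with hμ_def
  set E : ℤ → Set (EuclideanSpace ℝ (Fin n)) :=
    fun j => {x | (2 : ℝ≥0∞) ^ ((j : ℝ) - 1) < G x} with hE_def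
  have hEm : ∀ j : ℤ, MeasurableSet (E j) :=
    fun j => hGm measurableSet_Ioi
  set A : ℤ → Set (EuclideanSpace ℝ (Fin n)) :=
    fun k => {x | (2 : ℝ≥0∞) ^ ((k : ℝ) - 1) < G x ∧ G x ≤ (2 : ℝ≥0∞) ^ (k : ℝ)} with hA_def
  have hAm : ∀ k : ℤ, MeasurableSet (A k) := fun k =>
    (hGm measurableSet_Ioi).inter (hGm measurableSet_Iic)
  by_cases htop : μ {x | G x = ∞} = 0
  swap
  · -- infinite case: RHS is ∞
    have hmeas : MeasurableSet {x | G x = ∞} := hGm (measurableSet_singleton ∞)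
    have hconst : ∫⁻ x in {x | G x = ∞}, G x ^ p ∂μ = ∫⁻ _ in {x | G x = ∞}, ∞ ∂μ := by
      refine setLIntegral_congr_fun hmeas (fun x (hx : G x = ∞) => ?_)
      show G x ^ p = ∞; rw [hx, ENNReal.top_rpow_of_pos hp0]
    have hinf : ∫⁻ x, G x ^ p ∂μ = ∞ := by
      refine eq_top_iff.mpr (le_trans ?_ (setLIntegral_le_lintegral {x | G x = ∞} fun x => G x ^ p))
      rw [hconst, setLIntegral_const, ENNReal.top_mul htop]
    rw [hinf, ENNReal.mul_top hK0]
    exact le_top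
  -- main case
  have hEsub : ∀ j : ℤ, E j ⊆ {x | G x = ∞} ∪ ⋃ i : ℕ, A (j + i) := by
    intro j x hx
    by_cases hGx : G x = ∞
    · exact Or.inl hGx
    right
    have hex : ∃ i : ℕ, G x ≤ (2 : ℝ≥0∞) ^ ((j : ℝ) + i) := by
      obtain ⟨N, hN⟩ := ENNReal.exists_nat_gt hGx
      refine ⟨((N : ℤ) - j).toNat, ?_⟩
      have hji : (N : ℝ) ≤ (j : ℝ) + (((N : ℤ) - j).toNat : ℕ) := by
        have h1 : ((N : ℤ) - j) ≤ (((N : ℤ) - j).toNat : ℤ) := Int.self_le_toNat _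
        have h2 : (N : ℤ) ≤ j + (((N : ℤ) - j).toNat : ℤ) := by omega
        exact_mod_cast h2
      have hN2 : (N : ℝ≥0∞) ≤ (2 : ℝ≥0∞) ^ (N : ℝ) := by
        rw [ENNReal.rpow_natCast]
        have : (N : ℝ≥0∞) ≤ ((2 ^ N : ℕ) : ℝ≥0∞) := by
          exact_mod_cast (Nat.lt_two_pow_self (n := N)).le
        simpa using this
      exact le_trans (le_trans hN.le hN2)
        (ENNReal.rpow_le_rpow_of_exponent_le (by norm_num) hji)
    classical
    set i₀ : ℕ := Nat.find hex with hi₀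
    refine Set.mem_iUnion.mpr ⟨i₀, ?_, ?_⟩
    · -- lower bound
      rcases Nat.eq_zero_or_pos i₀ with h0 | hpos
      · have : ((j + (i₀ : ℤ) : ℤ) : ℝ) - 1 = (j : ℝ) - 1 := by
          rw [h0]; push_cast; ring
        rw [this]
        exact hx
      · obtain ⟨m, hm⟩ := Nat.exists_eq_succ_of_ne_zero hpos.ne'
        have hmin := Nat.find_min hex (m := m) (by omega)
        have : ((j + (i₀ : ℤ) : ℤ) : ℝ) - 1 = (j : ℝ) + m := by
          rw [hm]; push_cast; ring
        rw [this]
        exact lt_of_not_ge hmin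
    · -- upper bound
      have := Nat.find_spec hex
      have hcast : ((j + (i₀ : ℤ) : ℤ) : ℝ) = (j : ℝ) + i₀ := by push_cast; ring
      rw [hcast]
      exact this
  have hm_le : ∀ j : ℤ, μ (E j) ≤ ∑' i : ℕ, μ (A (j + i)) := by
    intro j
    calc μ (E j) ≤ μ ({x | G x = ∞} ∪ ⋃ i : ℕ, A (j + i)) := measure_mono (hEsub j)
      _ ≤ μ {x | G x = ∞} + μ (⋃ i : ℕ, A (j + i)) := measure_union_le _ _
      _ = μ (⋃ i : ℕ, A (j + i)) := by rw [htop, zero_add]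
      _ ≤ ∑' i : ℕ, μ (A (j + i)) := measure_iUnion_le _
  have hB : ∀ j : ℤ, ∫⁻ x, h j x ^ p ∂μ ≤ (2 : ℝ≥0∞) ^ ((j : ℝ) * p) * μ (E j) := by
    intro j
    have hsupp' : ∀ᵐ x ∂μ, x ∉ E j → h j x = 0 := by
      filter_upwards [hsupp j] with x hx hxE
      exact hx (not_lt.mp hxE)
    have key := lintegral_rpow_le_of_support hp0 hp1 (hhm j) (hEm j) hsupp'
    rcases eq_or_ne (μ (E j)) 0 with hE0 | hE0
    · have hz : ∫⁻ x, h j x ∂μ = 0 := by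
        refine le_antisymm ?_ (zero_le)
        have := hint j
        rw [hμ_def] at hE0 ⊢
        simpa [show {x | (2 : ℝ≥0∞) ^ ((j : ℝ) - 1) < G x} = E j from rfl, hμ_def, hE0] using this
      calc ∫⁻ x, h j x ^ p ∂μ ≤ (∫⁻ x, h j x ∂μ) ^ p * μ (E j) ^ (1 - p) := key
        _ = 0 := by rw [hz, ENNReal.zero_rpow_of_pos hp0, zero_mul]
        _ ≤ _ := zero_le
    rcases eq_or_ne (μ (E j)) ∞ with hEt | hEt
    · rw [hEt, ENNReal.mul_top (ENNReal.rpow_pos (by norm_num) h2net).ne']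
      exact le_top
    have hint' : ∫⁻ x, h j x ∂μ ≤ (2 : ℝ≥0∞) ^ (j : ℝ) * μ (E j) := hint j
    calc ∫⁻ x, h j x ^ p ∂μ ≤ (∫⁻ x, h j x ∂μ) ^ p * μ (E j) ^ (1 - p) := key
      _ ≤ ((2 : ℝ≥0∞) ^ (j : ℝ) * μ (E j)) ^ p * μ (E j) ^ (1 - p) :=
          mul_le_mul_left (ENNReal.rpow_le_rpow hint' hp0.le) _
      _ = (2 : ℝ≥0∞) ^ ((j : ℝ) * p) * (μ (E j) ^ p * μ (E j) ^ (1 - p)) := by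
          rw [ENNReal.mul_rpow_of_nonneg _ _ hp0.le, ← ENNReal.rpow_mul, mul_assoc]
      _ = (2 : ℝ≥0∞) ^ ((j : ℝ) * p) * μ (E j) := by
          rw [← ENNReal.rpow_add _ _ hE0 hEt,
            show p + (1 - p) = 1 by ring, ENNReal.rpow_one]
  -- the geometric tail estimate
  have hdisj_lt : ∀ k l : ℤ, k < l → Disjoint (A k) (A l) := by
    intro k l hlt
    refine Set.disjoint_left.mpr fun x hxk hxl => ?_
    have h1 : G x ≤ (2 : ℝ≥0∞) ^ (k : ℝ) := hxk.2
    have h2 : (2 : ℝ≥0∞) ^ ((l : ℝ) - 1) < G x := hxl.1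
    have hkl' : (k : ℝ) ≤ (l : ℝ) - 1 := by
      have h3 : (k : ℤ) ≤ l - 1 := by omega
      have h4 : (k : ℝ) ≤ ((l - 1 : ℤ) : ℝ) := by exact_mod_cast h3
      push_cast at h4
      linarith
    exact absurd (h1.trans (ENNReal.rpow_le_rpow_of_exponent_le (by norm_num) hkl')) h2.not_ge
  have hA_disj : Pairwise (Function.onFun Disjoint A) := by
    intro k l hkl
    rcases hkl.lt_or_gt with hlt | hlt
    · exact hdisj_lt _ _ hlt
    · exact (hdisj_lt _ _ hlt).symm
  have hT : ∑' k : ℤ, (2 : ℝ≥0∞) ^ ((k : ℝ) * p) * μ (A k)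
      ≤ (2 : ℝ≥0∞) ^ p * ∫⁻ x, G x ^ p ∂μ := by
    have hterm : ∀ k : ℤ, (2 : ℝ≥0∞) ^ ((k : ℝ) * p) * μ (A k)
        ≤ (2 : ℝ≥0∞) ^ p * ∫⁻ x in A k, G x ^ p ∂μ := by
      intro k
      have h1 : (2 : ℝ≥0∞) ^ (((k : ℝ) - 1) * p) * μ (A k) ≤ ∫⁻ x in A k, G x ^ p ∂μ := by
        rw [← setLIntegral_const]
        refine setLIntegral_mono (hGm.pow_const p) fun x hx => ?_
        rw [ENNReal.rpow_mul]
        exact ENNReal.rpow_le_rpow hx.1.le hp0.le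
      calc (2 : ℝ≥0∞) ^ ((k : ℝ) * p) * μ (A k)
          = (2 : ℝ≥0∞) ^ p * ((2 : ℝ≥0∞) ^ (((k : ℝ) - 1) * p) * μ (A k)) := by
            rw [← mul_assoc, ← ENNReal.rpow_add _ _ h2ne0 h2net]
            congr 2
            ring
        _ ≤ _ := mul_le_mul_right h1 _
    calc ∑' k : ℤ, (2 : ℝ≥0∞) ^ ((k : ℝ) * p) * μ (A k)
        ≤ ∑' k : ℤ, (2 : ℝ≥0∞) ^ p * ∫⁻ x in A k, G x ^ p ∂μ := ENNReal.tsum_le_tsum hterm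
      _ = (2 : ℝ≥0∞) ^ p * ∑' k : ℤ, ∫⁻ x in A k, G x ^ p ∂μ := ENNReal.tsum_mul_left
      _ = (2 : ℝ≥0∞) ^ p * ∫⁻ x in ⋃ k : ℤ, A k, G x ^ p ∂μ := by
          rw [lintegral_iUnion hAm hA_disj]
      _ ≤ (2 : ℝ≥0∞) ^ p * ∫⁻ x, G x ^ p ∂μ :=
          mul_le_mul_right (setLIntegral_le_lintegral _ _) _
  -- put everything together
  calc ∫⁻ x, (∑' j : ℤ, h j x) ^ p ∂μ
      ≤ ∫⁻ x, ∑' j : ℤ, h j x ^ p ∂μ :=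
        lintegral_mono fun x => tsum_rpow_le_of_le_one _ hp0 hp1
    _ = ∑' j : ℤ, ∫⁻ x, h j x ^ p ∂μ :=
        lintegral_tsum fun j => ((hhm j).pow_const p).aemeasurable
    _ ≤ ∑' j : ℤ, (2 : ℝ≥0∞) ^ ((j : ℝ) * p) * μ (E j) := ENNReal.tsum_le_tsum hB
    _ ≤ ∑' j : ℤ, ∑' i : ℕ, (2 : ℝ≥0∞) ^ ((j : ℝ) * p) * μ (A (j + i)) := by
        refine ENNReal.tsum_le_tsum fun j => ?_
        rw [ENNReal.tsum_mul_left]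
        exact mul_le_mul_right (hm_le j) _
    _ = ∑' i : ℕ, ∑' j : ℤ, (2 : ℝ≥0∞) ^ ((j : ℝ) * p) * μ (A (j + i)) := ENNReal.tsum_comm
    _ = ∑' i : ℕ, (2 : ℝ≥0∞) ^ (-(i : ℝ) * p)
          * ∑' k : ℤ, (2 : ℝ≥0∞) ^ ((k : ℝ) * p) * μ (A k) := by
        refine tsum_congr fun i => ?_
        rw [← ENNReal.tsum_mul_left]
        calc ∑' j : ℤ, (2 : ℝ≥0∞) ^ ((j : ℝ) * p) * μ (A (j + i))
            = ∑' k : ℤ, (2 : ℝ≥0∞) ^ (((Equiv.subRight (i : ℤ) k : ℤ) : ℝ) * p)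
              * μ (A (Equiv.subRight (i : ℤ) k + i)) := ((Equiv.subRight (i : ℤ)).tsum_eq _).symm
          _ = ∑' k : ℤ, (2 : ℝ≥0∞) ^ (-(i : ℝ) * p) * ((2 : ℝ≥0∞) ^ ((k : ℝ) * p) * μ (A k)) := by
              refine tsum_congr fun k => ?_
              have hAeq : A (Equiv.subRight (i : ℤ) k + i) = A k := by
                simp [Equiv.subRight]
              have hcast : ((Equiv.subRight (i : ℤ) k : ℤ) : ℝ) * p
                  = -(i : ℝ) * p + (k : ℝ) * p := by
                simp only [Equiv.subRight_apply]
                push_cast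
                ring
              rw [hAeq, hcast, ENNReal.rpow_add _ _ h2ne0 h2net, mul_assoc]
    _ = (∑' i : ℕ, (2 : ℝ≥0∞) ^ (-(i : ℝ) * p))
          * ∑' k : ℤ, (2 : ℝ≥0∞) ^ ((k : ℝ) * p) * μ (A k) := ENNReal.tsum_mul_right
    _ = S * ∑' k : ℤ, (2 : ℝ≥0∞) ^ ((k : ℝ) * p) * μ (A k) := by
        congr 1
        rw [hS_def]
        refine tsum_congr fun i => ?_
        rw [hr_def, ← ENNReal.rpow_natCast ((2 : ℝ≥0∞) ^ (-p)) i, ← ENNReal.rpow_mul]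
        congr 1
        ring
    _ ≤ S * ((2 : ℝ≥0∞) ^ p * ∫⁻ x, G x ^ p ∂μ) := mul_le_mul_right hT _
    _ = K * ∫⁻ x, G x ^ p ∂μ := by rw [hK_def, ← mul_assoc, mul_comm S ((2 : ℝ≥0∞) ^ p)]

end
end

section
/- Let $m, n \ge 1$, let $0 < p_1, \dots, p_m \le 1$ and define $p$ by $1/p = 1/p_1 + \dots + 1/p_m$, and let $s$ be a real number with $s > n(1/p_j - 1)$ for every $j$. Then there is a constant $C = C(n, m, s, p_1, \dots, p_m)$ such that for all finite families of axis-parallel cubes $Q_{j,k}$ in $\mathbf{R}^n$ (with centers $c_{j,k}$ and side lengths $l_{j,k}$), indexed by $1 \le j \le m$ and $k$ in finite index sets, and all nonnegative coefficients $\lambda_{j,k}$, one has $\Big\| \prod_{j=1}^m \Big( \sum_{k} \lambda_{j,k} \frac{ |Q_{j,k}|^{\,1 - 1/p_j + s/n} }{ (|x - c_{j,k}| + l_{j,k})^{\,n+s} } \Big) \Big\|_{L^{p}(\mathbf{R}^n)} \le C \prod_{j=1}^m \Big( \sum_{k} \lambda_{j,k}^{\,p_j} \Big)^{1/p_j}$.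 -/
open MeasureTheory Set

noncomputable section

lemma aux_sum_rpow {ι : Type*} (t : Finset ι) (f : ι → ENNReal) {r : ℝ}
    (hr : 0 < r) (hr1 : r ≤ 1) : (∑ i ∈ t, f i) ^ r ≤ ∑ i ∈ t, f i ^ r := by
  induction t using Finset.cons_induction with
  | empty => simp [ENNReal.zero_rpow_of_pos hr]
  | cons a t ha ih =>
    rw [Finset.sum_cons, Finset.sum_cons]
    exact le_trans (ENNReal.rpow_add_le_add_rpow _ _ hr.le hr1) (by gcongr)

lemma aux_kernel (n : ℕ) (β : ℝ) (c : EuclideanSpace ℝ (Fin n)) {l : ℝ} (hl : 0 < l) :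
    ∫⁻ x, ENNReal.ofReal (‖x - c‖ + l) ^ (-β)
      = ENNReal.ofReal l ^ ((n : ℝ) - β) *
        ∫⁻ y : EuclideanSpace ℝ (Fin n), ENNReal.ofReal (‖y‖ + 1) ^ (-β) := by
  have hg : Measurable fun x : EuclideanSpace ℝ (Fin n) => ENNReal.ofReal (‖x‖ + l) ^ (-β) :=
    (ENNReal.measurable_ofReal.comp (measurable_norm.add_const l)).pow measurable_const
  have h1 : ∫⁻ x, ENNReal.ofReal (‖x - c‖ + l) ^ (-β)
      = ∫⁻ x : EuclideanSpace ℝ (Fin n), ENNReal.ofReal (‖x‖ + l) ^ (-β) :=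
    lintegral_sub_right_eq_self (fun x => ENNReal.ofReal (‖x‖ + l) ^ (-β)) c
  have hln0 : ENNReal.ofReal (l ^ n) ≠ 0 := by
    simp [ENNReal.ofReal_eq_zero, not_le, pow_pos hl n]
  have h2 : ∫⁻ y : EuclideanSpace ℝ (Fin n), ENNReal.ofReal (‖l • y‖ + l) ^ (-β)
      = (ENNReal.ofReal (l ^ n))⁻¹ *
        ∫⁻ x : EuclideanSpace ℝ (Fin n), ENNReal.ofReal (‖x‖ + l) ^ (-β) := by
    rw [← lintegral_map hg (measurable_const_smul l),
      MeasureTheory.Measure.map_addHaar_smul volume hl.ne', finrank_euclideanSpace_fin,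
      lintegral_smul_measure, smul_eq_mul, abs_of_pos (by positivity), ENNReal.ofReal_inv_of_pos (by positivity)]
  have h3 : ∀ y : EuclideanSpace ℝ (Fin n),
      ENNReal.ofReal (‖l • y‖ + l) ^ (-β)
        = ENNReal.ofReal l ^ (-β) * ENNReal.ofReal (‖y‖ + 1) ^ (-β) := by
    intro y
    have : ‖l • y‖ + l = l * (‖y‖ + 1) := by
      rw [norm_smul, Real.norm_eq_abs, abs_of_pos hl]; ring
    rw [this, ENNReal.ofReal_mul hl.le,
      ENNReal.mul_rpow_of_ne_top ENNReal.ofReal_ne_top ENNReal.ofReal_ne_top]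
  have h4 : ∫⁻ x : EuclideanSpace ℝ (Fin n), ENNReal.ofReal (‖x‖ + l) ^ (-β)
      = ENNReal.ofReal (l ^ n) *
        ∫⁻ y : EuclideanSpace ℝ (Fin n), ENNReal.ofReal (‖l • y‖ + l) ^ (-β) := by
    rw [h2, ← mul_assoc, ENNReal.mul_inv_cancel hln0 ENNReal.ofReal_ne_top, one_mul]
  rw [h1, h4]
  simp_rw [h3]
  rw [lintegral_const_mul' _ _ (by
    rw [ENNReal.rpow_neg]
    exact ENNReal.inv_ne_top.mpr (by simp [ENNReal.rpow_eq_zero_iff, hl, hl.ne']) ), ← mul_assoc]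
  congr 1
  rw [ENNReal.ofReal_pow hl.le, ← ENNReal.rpow_natCast _ n,
    ← ENNReal.rpow_add _ _ (by simp [ENNReal.ofReal_eq_zero, not_le, hl]) ENNReal.ofReal_ne_top,
    sub_eq_add_neg]

lemma aux_term (n : ℕ) (hn : 1 ≤ n) {p s : ℝ} (hp : 0 < p)
    (c : EuclideanSpace ℝ (Fin n)) {l : ℝ} (hl : 0 < l) :
    ∫⁻ x, ENNReal.ofReal ((l ^ n) ^ (1 - 1 / p + s / n) / (‖x - c‖ + l) ^ ((n : ℝ) + s)) ^ p
      = ∫⁻ y : EuclideanSpace ℝ (Fin n), ENNReal.ofReal (‖y‖ + 1) ^ (-(((n : ℝ) + s) * p)) := by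
  have hn0 : (0 : ℝ) < n := by exact_mod_cast Nat.pos_of_ne_zero (by omega)
  set a : ℝ := 1 - 1 / p + s / n with ha
  have hA : (0 : ℝ) < (l ^ n) ^ a := Real.rpow_pos_of_pos (pow_pos hl n) a
  have hpt : ∀ x : EuclideanSpace ℝ (Fin n),
      ENNReal.ofReal ((l ^ n) ^ a / (‖x - c‖ + l) ^ ((n : ℝ) + s)) ^ p
        = ENNReal.ofReal ((l ^ n) ^ a) ^ p *
          ENNReal.ofReal (‖x - c‖ + l) ^ (-(((n : ℝ) + s) * p)) := by
    intro x
    have hB : (0 : ℝ) < ‖x - c‖ + l := by positivity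
    rw [ENNReal.ofReal_div_of_pos (Real.rpow_pos_of_pos hB _),
      ENNReal.div_rpow_of_nonneg _ _ hp.le,
      ← ENNReal.ofReal_rpow_of_pos hB, ← ENNReal.rpow_mul,
      div_eq_mul_inv, ← ENNReal.rpow_neg]
  simp_rw [hpt]
  rw [lintegral_const_mul' _ _
      (ENNReal.rpow_ne_top_of_nonneg hp.le ENNReal.ofReal_ne_top),
    aux_kernel n (((n : ℝ) + s) * p) c hl, ← mul_assoc]
  have hcoef : ENNReal.ofReal ((l ^ n) ^ a) ^ p
      = ENNReal.ofReal l ^ ((n : ℝ) * a * p) := by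
    rw [← Real.rpow_natCast l n, ← Real.rpow_mul hl.le,
      ← ENNReal.ofReal_rpow_of_pos hl, ← ENNReal.rpow_mul]
  rw [hcoef, ← ENNReal.rpow_add _ _ (by simp [ENNReal.ofReal_eq_zero, not_le, hl])
      ENNReal.ofReal_ne_top]
  have : (n : ℝ) * a * p + ((n : ℝ) - ((n : ℝ) + s) * p) = 0 := by
    rw [ha]; field_simp; ring
  rw [this, ENNReal.rpow_zero, one_mul]

/-- Let `0 < p_j ≤ 1`, `1/p = ∑ 1/p_j`, and `s > n(1/p_j - 1)` for all `j`. Then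
`‖∏_j ∑_k λ_{j,k} |Q_{j,k}|^{1-1/p_j+s/n} (|x-c_{j,k}|+l_{j,k})^{-(n+s)}‖_{L^p}
  ≤ C ∏_j (∑_k λ_{j,k}^{p_j})^{1/p_j}`. -/
theorem stmt8 (n m : ℕ) (hn : 1 ≤ n) (hm : 1 ≤ m)
    (p : Fin m → ℝ) (hp0 : ∀ j, 0 < p j) (hp1 : ∀ j, p j ≤ 1)
    (q : ℝ) (hq : 1 / q = ∑ j, 1 / p j)
    (s : ℝ) (hs : ∀ j, (n : ℝ) * (1 / p j - 1) < s) :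
    ∃ C : ℝ, 0 < C ∧
      ∀ (K : Fin m → Finset ℕ) (c : Fin m → ℕ → EuclideanSpace ℝ (Fin n))
        (l : Fin m → ℕ → ℝ) (lam : Fin m → ℕ → ℝ),
        (∀ j k, 0 < l j k) →
        (∀ j k, 0 ≤ lam j k) →
        eLpNorm (fun x => ∏ j, ∑ k ∈ K j,
            lam j k * (l j k ^ n) ^ (1 - 1 / p j + s / n) /
              (‖x - c j k‖ + l j k) ^ ((n : ℝ) + s))
          (ENNReal.ofReal q) volume
        ≤ ENNReal.ofReal (C * ∏ j, (∑ k ∈ K j, lam j k ^ p j) ^ (1 / p j)) := by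
  have hnem : Nonempty (Fin m) := Fin.pos_iff_nonempty.mp (by omega)
  have hinv1 : ∀ j, (1 : ℝ) ≤ 1 / p j := fun j =>
    (le_div_iff₀ (hp0 j)).mpr (by simpa using hp1 j)
  have hq0 : 0 < q := by
    have h1 : 0 < 1 / q := by
      rw [hq]; exact Finset.sum_pos (fun j _ => by have := hp0 j; positivity) Finset.univ_nonempty
    exact one_div_pos.mp h1
  have hs0 : 0 < s := by
    have j0 : Fin m := ⟨0, by omega⟩
    refine lt_of_le_of_lt (mul_nonneg (Nat.cast_nonneg n) ?_) (hs j0)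
    linarith [hinv1 j0]
  -- the basic integrals
  set I : Fin m → ENNReal := fun j =>
    ∫⁻ y : EuclideanSpace ℝ (Fin n), ENNReal.ofReal (‖y‖ + 1) ^ (-(((n : ℝ) + s) * p j)) with hI
  have hI_top : ∀ j, I j ≠ ⊤ := by
    intro j
    have hnr : (Module.finrank ℝ (EuclideanSpace ℝ (Fin n)) : ℝ) < ((n : ℝ) + s) * p j := by
      rw [finrank_euclideanSpace_fin]
      have h1 : (n : ℝ) / p j < (n : ℝ) + s := by
        have := hs j
        rw [mul_sub, mul_one, mul_one_div] at this
        linarith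
      exact (div_lt_iff₀ (hp0 j)).mp h1
    have hfin := finite_integral_one_add_norm (μ := (volume : Measure (EuclideanSpace ℝ (Fin n)))) hnr
    have heq : I j = ∫⁻ y : EuclideanSpace ℝ (Fin n),
        ENNReal.ofReal ((1 + ‖y‖) ^ (-(((n : ℝ) + s) * p j))) := by
      refine lintegral_congr fun y => ?_
      rw [ENNReal.ofReal_rpow_of_pos (show (0:ℝ) < ‖y‖ + 1 by positivity), add_comm ‖y‖ (1 : ℝ)]
    rw [heq]
    exact hfin.ne
  refine ⟨(∏ j, (I j).toReal ^ (1 / p j)) + 1, by positivity, ?_⟩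
  intro K c l lam hl hlam
  set F : Fin m → EuclideanSpace ℝ (Fin n) → ℝ := fun j x => ∑ k ∈ K j,
    lam j k * (l j k ^ n) ^ (1 - 1 / p j + s / n) /
      (‖x - c j k‖ + l j k) ^ ((n : ℝ) + s) with hFdef
  have htnn : ∀ j k (x : EuclideanSpace ℝ (Fin n)),
      0 ≤ lam j k * (l j k ^ n) ^ (1 - 1 / p j + s / n) /
        (‖x - c j k‖ + l j k) ^ ((n : ℝ) + s) := fun j k x =>
    div_nonneg (mul_nonneg (hlam j k) (Real.rpow_nonneg (pow_nonneg (hl j k).le n) _))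
      (Real.rpow_nonneg (add_nonneg (norm_nonneg _) (hl j k).le) _)
  have hF0 : ∀ j x, 0 ≤ F j x := fun j x => Finset.sum_nonneg fun k _ => htnn j k x
  have hFm : ∀ j, Measurable (F j) := fun j => Finset.measurable_sum _ fun k _ =>
    measurable_const.div
      (((measurable_id.sub measurable_const).norm.add_const (l j k)).pow measurable_const)
  show eLpNorm (fun x => ∏ j, F j x) (ENNReal.ofReal q) volume ≤ _
  have hqne : ENNReal.ofReal q ≠ 0 := by simp [ENNReal.ofReal_eq_zero, not_le, hq0]
  rw [eLpNorm_eq_lintegral_rpow_enorm_toReal hqne ENNReal.ofReal_ne_top, ENNReal.toReal_ofReal hq0.le]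
  have hpt : ∀ x : EuclideanSpace ℝ (Fin n),
      ((‖∏ j, F j x‖₊ : ENNReal)) ^ q
        = ∏ j, (ENNReal.ofReal (F j x) ^ p j) ^ (q / p j) := by
    intro x
    rw [← enorm_eq_nnnorm, Real.enorm_eq_ofReal (Finset.prod_nonneg fun j _ => hF0 j x),
      ENNReal.ofReal_prod_of_nonneg (fun j _ => hF0 j x),
      ← ENNReal.prod_rpow_of_nonneg hq0.le]
    refine Finset.prod_congr rfl fun j _ => ?_
    rw [← ENNReal.rpow_mul]
    congr 1
    rw [mul_comm (p j) (q / p j), div_mul_cancel₀ q (hp0 j).ne']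
  have hsum1 : ∑ j, q / p j = 1 := by
    have h2 : ∑ j : Fin m, q / p j = q * ∑ j, 1 / p j := by
      rw [Finset.mul_sum]
      exact Finset.sum_congr rfl fun j _ => by rw [mul_one_div]
    rw [h2, ← hq]
    field_simp
  have hHold := ENNReal.lintegral_prod_norm_pow_le (μ := (volume : Measure (EuclideanSpace ℝ (Fin n))))
    Finset.univ (f := fun j x => ENNReal.ofReal (F j x) ^ p j)
    (fun j _ => ((ENNReal.measurable_ofReal.comp (hFm j)).pow measurable_const).aemeasurable)
    hsum1 (fun j _ => by have := hp0 j; have := hq0; positivity)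
  have hA : ∀ j, (∫⁻ x, ENNReal.ofReal (F j x) ^ p j)
      ≤ I j * ENNReal.ofReal (∑ k ∈ K j, lam j k ^ p j) := by
    intro j
    have hterm : ∀ x : EuclideanSpace ℝ (Fin n), ENNReal.ofReal (F j x) ^ p j
        ≤ ∑ k ∈ K j, ENNReal.ofReal (lam j k * (l j k ^ n) ^ (1 - 1 / p j + s / n) /
            (‖x - c j k‖ + l j k) ^ ((n : ℝ) + s)) ^ p j := by
      intro x
      rw [hFdef, ENNReal.ofReal_sum_of_nonneg (fun k _ => htnn j k x)]
      exact aux_sum_rpow _ _ (hp0 j) (hp1 j)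
    calc (∫⁻ x, ENNReal.ofReal (F j x) ^ p j)
        ≤ ∫⁻ x, ∑ k ∈ K j, ENNReal.ofReal (lam j k * (l j k ^ n) ^ (1 - 1 / p j + s / n) /
            (‖x - c j k‖ + l j k) ^ ((n : ℝ) + s)) ^ p j := lintegral_mono hterm
      _ = ∑ k ∈ K j, ∫⁻ x, ENNReal.ofReal (lam j k * (l j k ^ n) ^ (1 - 1 / p j + s / n) /
            (‖x - c j k‖ + l j k) ^ ((n : ℝ) + s)) ^ p j := by
          refine lintegral_finset_sum _ fun k _ => ?_
          exact (ENNReal.measurable_ofReal.comp (measurable_const.div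
            (((measurable_id.sub measurable_const).norm.add_const (l j k)).pow
              measurable_const))).pow measurable_const
      _ = ∑ k ∈ K j, ENNReal.ofReal (lam j k ^ p j) * I j := by
          refine Finset.sum_congr rfl fun k _ => ?_
          simp_rw [mul_div_assoc, ENNReal.ofReal_mul (hlam j k),
            ENNReal.mul_rpow_of_ne_top ENNReal.ofReal_ne_top ENNReal.ofReal_ne_top]
          rw [lintegral_const_mul' _ _
              (ENNReal.rpow_ne_top_of_nonneg (hp0 j).le ENNReal.ofReal_ne_top),
            aux_term n hn (hp0 j) (c j k) (hl j k),
            ENNReal.ofReal_rpow_of_nonneg (hlam j k) (hp0 j).le]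
      _ = I j * ENNReal.ofReal (∑ k ∈ K j, lam j k ^ p j) := by
          rw [← Finset.sum_mul, ← ENNReal.ofReal_sum_of_nonneg
            (fun k _ => Real.rpow_nonneg (hlam j k) _), mul_comm]
  calc (∫⁻ x, ((‖∏ j, F j x‖₊ : ENNReal)) ^ q) ^ (1 / q)
      = (∫⁻ x, ∏ j, (ENNReal.ofReal (F j x) ^ p j) ^ (q / p j)) ^ (1 / q) := by
        congr 1; exact lintegral_congr hpt
    _ ≤ (∏ j, (∫⁻ x, ENNReal.ofReal (F j x) ^ p j) ^ (q / p j)) ^ (1 / q) :=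
        ENNReal.rpow_le_rpow hHold (one_div_nonneg.mpr hq0.le)
    _ = ∏ j, (∫⁻ x, ENNReal.ofReal (F j x) ^ p j) ^ (1 / p j) := by
        rw [← ENNReal.prod_rpow_of_nonneg (one_div_nonneg.mpr hq0.le)]
        refine Finset.prod_congr rfl fun j _ => ?_
        rw [← ENNReal.rpow_mul]
        congr 1
        rw [div_mul_div_comm, mul_one, mul_comm (p j) q, ← div_div, div_self hq0.ne']
    _ ≤ ∏ j, (I j * ENNReal.ofReal (∑ k ∈ K j, lam j k ^ p j)) ^ (1 / p j) := by
        refine Finset.prod_le_prod' fun j _ => ?_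
        exact ENNReal.rpow_le_rpow (hA j) (one_div_nonneg.mpr (hp0 j).le)
    _ = ∏ j, ENNReal.ofReal ((I j).toReal ^ (1 / p j) *
          (∑ k ∈ K j, lam j k ^ p j) ^ (1 / p j)) := by
        refine Finset.prod_congr rfl fun j _ => ?_
        have h1 : (0:ℝ) ≤ ∑ k ∈ K j, lam j k ^ p j :=
          Finset.sum_nonneg fun k _ => Real.rpow_nonneg (hlam j k) _
        rw [ENNReal.ofReal_mul (Real.rpow_nonneg ENNReal.toReal_nonneg _),
          ← ENNReal.ofReal_rpow_of_nonneg ENNReal.toReal_nonneg (one_div_nonneg.mpr (hp0 j).le),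
          ← ENNReal.ofReal_rpow_of_nonneg h1 (one_div_nonneg.mpr (hp0 j).le),
          ENNReal.ofReal_toReal (hI_top j),
          ← ENNReal.mul_rpow_of_ne_top (hI_top j) ENNReal.ofReal_ne_top]
    _ = ENNReal.ofReal ((∏ j, (I j).toReal ^ (1 / p j)) *
          ∏ j, (∑ k ∈ K j, lam j k ^ p j) ^ (1 / p j)) := by
        rw [← ENNReal.ofReal_prod_of_nonneg (fun j _ => mul_nonneg
            (Real.rpow_nonneg ENNReal.toReal_nonneg _)
            (Real.rpow_nonneg (Finset.sum_nonneg fun k _ => Real.rpow_nonneg (hlam j _ ) _) _)),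
          ← Finset.prod_mul_distrib]
    _ ≤ ENNReal.ofReal (((∏ j, (I j).toReal ^ (1 / p j)) + 1) *
          ∏ j, (∑ k ∈ K j, lam j k ^ p j) ^ (1 / p j)) := by
        refine ENNReal.ofReal_le_ofReal (mul_le_mul_of_nonneg_right (by linarith) ?_)
        refine Finset.prod_nonneg fun j _ => Real.rpow_nonneg ?_ _
        exact Finset.sum_nonneg fun k _ => Real.rpow_nonneg (hlam j k) _

end
end
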